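/- arXiv:1906.09414 — 4 statements merged into one kernel-verified Lean document; each statement's English description precedes it below -/
import Mathlib

section
/- Let Γ be a finite connected regular simple graph of valency d ≥ 3, let G ≤ Aut(Γ) with Γ (G,2)-arc-transitive, and let {u,v} be an edge of Γ. Then the setwise edge-stabilizer G_{{u,v}} is solvable if and only if (G_v^{Γ(v)})_u = φ_v(G_{uv}) is solvable, and the vertex-stabilizer G_v is solvable if and only if the local group G_v^{Γ(v)} is solvable. -/
open MulAction
open scoped Pointwise

namespace Stmt6

/-- The homomorphism `φ_v` from the vertex-stabilizer `G_v` to the permutation group of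
the neighborhood `Γ(v)`, given by restricting the action. -/
def localHom {V G : Type*} [Group G] [MulAction G V] (Γ : SimpleGraph V)
    (hadj : ∀ (g : G) ⦃a b : V⦄, Γ.Adj a b → Γ.Adj (g • a) (g • b)) (v : V) :
    stabilizer G v →* Equiv.Perm (Γ.neighborSet v) where
  toFun g := Equiv.Perm.subtypePerm (MulAction.toPerm (g : G)) (fun w => by
    have hgv : (g : G) • v = v := mem_stabilizer_iff.mp g.2
    simp only [SimpleGraph.mem_neighborSet, MulAction.toPerm_apply]
    constructor
    · intro hw
      have h1 := hadj ((g : G))⁻¹ hw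
      rw [inv_smul_smul] at h1
      have h2 : ((g : G))⁻¹ • v = v := inv_smul_eq_iff.mpr hgv.symm
      rwa [h2] at h1
    · intro hw
      have h1 := hadj (g : G) hw
      rwa [hgv] at h1)
  map_one' := by
    ext w
    simp [Equiv.Perm.subtypePerm_apply]
  map_mul' g₁ g₂ := by
    ext w
    simp [Equiv.Perm.subtypePerm_apply, mul_smul]
    rfl

/-! ### Auxiliary generic solvability lemmas -/

lemma solvable_of_le {X : Type*} [Group X] {P Q : Subgroup X} (h : P ≤ Q)
    (hQ : IsSolvable Q) : IsSolvable P := by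
  haveI : Group.IsSolvable Q := hQ
  exact solvable_of_solvable_injective (Subgroup.inclusion_injective h)

lemma solvable_ker_range {A B : Type*} [Group A] [Group B] (g : A →* B)
    (h1 : IsSolvable g.ker) (h2 : IsSolvable g.range) : IsSolvable A := by
  haveI : Group.IsSolvable g.ker := h1; haveI : Group.IsSolvable g.range := h2
  exact solvable_of_ker_le_range g.ker.subtype g.rangeRestrict
    (by rw [MonoidHom.ker_rangeRestrict, Subgroup.range_subtype])

lemma map_eq_range_comp {X Y : Type*} [Group X] [Group Y] (f : X →* Y) (P : Subgroup X) :
    P.map f = (f.comp P.subtype).range := by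
  ext x
  simp only [Subgroup.mem_map, MonoidHom.mem_range, MonoidHom.coe_comp, Function.comp_apply,
    Subgroup.coe_subtype]
  constructor
  · rintro ⟨a, ha, rfl⟩; exact ⟨⟨a, ha⟩, rfl⟩
  · rintro ⟨⟨a, ha⟩, rfl⟩; exact ⟨a, ha, rfl⟩

lemma solvable_map {X Y : Type*} [Group X] [Group Y] (f : X →* Y) (P : Subgroup X)
    (h : IsSolvable P) : IsSolvable (P.map f) := by
  haveI : Group.IsSolvable P := h
  rw [map_eq_range_comp]
  exact solvable_of_surjective (f.comp P.subtype).rangeRestrict_surjective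

/-- `Equiv.permCongr` as a multiplicative equivalence. -/
def permCongrMul {α β : Type*} (e : α ≃ β) : Equiv.Perm α ≃* Equiv.Perm β :=
  { e.permCongr with
    map_mul' := fun p q => by
      ext x
      simp [Equiv.permCongr_apply, Equiv.Perm.mul_apply] }

section Transport

variable {V G : Type*} [Group G] [MulAction G V] (Γ : SimpleGraph V)
  (hadj : ∀ (g : G) ⦃a b : V⦄, Γ.Adj a b → Γ.Adj (g • a) (g • b))

/-- Transport solvability of the local point stabilizer along a group element mapping
one arc to another. -/
lemma transport {u v w w' : V} (g : G) (hgv : g • v = w) (hgu : g • u = w')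
    (hsol : IsSolvable (Subgroup.map (localHom Γ hadj v)
      ((stabilizer G u ⊓ stabilizer G v).subgroupOf (stabilizer G v)))) :
    IsSolvable (Subgroup.map (localHom Γ hadj w)
      ((stabilizer G w' ⊓ stabilizer G w).subgroupOf (stabilizer G w))) := by
  have hmem : ∀ y : V, y ∈ Γ.neighborSet v → g • y ∈ Γ.neighborSet w := by
    intro y hy
    have := hadj g hy
    rwa [hgv] at this
  have hmem' : ∀ y : V, y ∈ Γ.neighborSet w → g⁻¹ • y ∈ Γ.neighborSet v := by
    intro y hy
    have := hadj g⁻¹ hy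
    rwa [← hgv, inv_smul_smul] at this
  let e : (Γ.neighborSet v : Set V) ≃ (Γ.neighborSet w : Set V) :=
  { toFun := fun y => ⟨g • (y : V), hmem y y.2⟩
    invFun := fun y => ⟨g⁻¹ • (y : V), hmem' y y.2⟩
    left_inv := fun y => Subtype.ext (inv_smul_smul g (y : V))
    right_inv := fun y => Subtype.ext (smul_inv_smul g (y : V)) }
  refine solvable_of_le ?_ (solvable_map (permCongrMul e).toMonoidHom _ hsol)
  rintro σ hσ
  rw [Subgroup.mem_map] at hσ
  obtain ⟨a, ha, rfl⟩ := hσ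
  rw [Subgroup.mem_subgroupOf] at ha
  obtain ⟨haw', haw⟩ := ha
  have hbv : (g⁻¹ * (a : G) * g) • v = v := by
    rw [mul_smul, mul_smul, hgv, mem_stabilizer_iff.mp a.2, ← hgv, inv_smul_smul]
  have hbu : (g⁻¹ * (a : G) * g) • u = u := by
    rw [mul_smul, mul_smul, hgu, mem_stabilizer_iff.mp haw', ← hgu, inv_smul_smul]
  refine Subgroup.mem_map.mpr ⟨localHom Γ hadj v ⟨g⁻¹ * (a : G) * g, hbv⟩, ?_, ?_⟩
  · exact Subgroup.mem_map.mpr ⟨⟨g⁻¹ * (a : G) * g, hbv⟩,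
      Subgroup.mem_subgroupOf.mpr ⟨hbu, hbv⟩, rfl⟩
  · refine Equiv.ext fun y => Subtype.ext ?_
    show g • ((g⁻¹ * (a : G) * g) • (g⁻¹ • (y : V))) = (a : G) • (y : V)
    simp [mul_smul]

end Transport

section Engine

variable {V G : Type*} [Fintype V] [Group G] [MulAction G V] (Γ : SimpleGraph V)

/-- If the point stabilizers of the local groups are all solvable, then the pointwise
stabilizer of the closed ball of radius 1 is solvable. -/
lemma fix_ball_solvable (hconn : Γ.Connected)
    (hadj : ∀ (g : G) ⦃a b : V⦄, Γ.Adj a b → Γ.Adj (g • a) (g • b))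
    (hfaith : ∀ g : G, (∀ x : V, g • x = x) → g = 1)
    (v : V)
    (hne : ∀ w : V, (Γ.neighborSet w).Nonempty)
    (hT : ∀ w w' : V, Γ.Adj w w' → IsSolvable (Subgroup.map (localHom Γ hadj w)
        ((stabilizer G w' ⊓ stabilizer G w).subgroupOf (stabilizer G w)))) :
    IsSolvable (fixingSubgroup G {x | Γ.dist v x ≤ 1}) := by
  classical
  set K : ℕ → Subgroup G := fun i => fixingSubgroup G {x | Γ.dist v x ≤ i} with hK
  -- a vertex at distance k+1 has a neighbour at distance ≤ k
  have f1 : ∀ (k : ℕ) (x : V), Γ.dist v x = k + 1 → ∃ y, Γ.Adj y x ∧ Γ.dist v y ≤ k := by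
    intro k x hdx
    obtain ⟨p, hp⟩ := hconn.exists_walk_length_eq_dist v x
    have hlen : p.reverse.length = k + 1 := by
      rw [SimpleGraph.Walk.length_reverse, hp, hdx]
    generalize p.reverse = r at hlen
    cases r with
    | nil => simp at hlen
    | @cons _ y _ h q =>
      refine ⟨y, h.symm, ?_⟩
      have h1 : Γ.dist y v ≤ q.length := SimpleGraph.dist_le q
      have h2 : q.length = k := by simpa using hlen
      rw [SimpleGraph.dist_comm]
      omega
  -- every vertex in the ball of radius i (i ≥ 1) has a neighbour in the ball
  have f2 : ∀ (i : ℕ) (w : V), 1 ≤ i → Γ.dist v w ≤ i →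
      ∃ w', Γ.Adj w w' ∧ Γ.dist v w' ≤ i := by
    intro i w hi hwd
    rcases Nat.eq_zero_or_pos (Γ.dist v w) with h0 | hpos
    · have hvw : v = w := ((hconn v w).dist_eq_zero_iff).mp h0
      subst hvw
      obtain ⟨x, hx⟩ := hne v
      refine ⟨x, hx, ?_⟩
      have : Γ.dist v x = 1 := SimpleGraph.dist_eq_one_iff_adj.mpr hx
      omega
    · obtain ⟨k, hk⟩ : ∃ k, Γ.dist v w = k + 1 := ⟨Γ.dist v w - 1, by omega⟩
      obtain ⟨y, hy, hyd⟩ := f1 k w hk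
      exact ⟨y, hy.symm, by omega⟩
  -- the induction step
  have step : ∀ i : ℕ, 1 ≤ i → IsSolvable (K (i + 1)) → IsSolvable (K i) := by
    intro i hi hKi1
    set Sfull : Finset V := Finset.univ.filter (fun w => Γ.dist v w ≤ i) with hSfull
    set D : Finset V → Set V :=
      fun S => {x | Γ.dist v x ≤ i} ∪ ⋃ w ∈ S, (Γ.neighborSet w : Set V) with hD
    set M : Finset V → Subgroup G := fun S => fixingSubgroup G (D S) with hM
    have hM0 : K i = M ∅ := by
      simp only [hM, hD, Finset.notMem_empty, Set.iUnion_of_empty, Set.iUnion_empty,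
        Set.union_empty, hK]
    have hMfull : M Sfull ≤ K (i + 1) := by
      intro a ha
      rw [hM, mem_fixingSubgroup_iff] at ha
      rw [hK, mem_fixingSubgroup_iff]
      intro x hx
      have hx' : Γ.dist v x ≤ i + 1 := hx
      rcases le_or_gt (Γ.dist v x) i with hle | hlt
      · exact ha x (Or.inl hle)
      · have hdx : Γ.dist v x = i + 1 := by omega
        obtain ⟨y, hy, hyd⟩ := f1 i x hdx
        refine ha x (Or.inr ?_)
        refine Set.mem_iUnion₂.mpr ⟨y, ?_, hy⟩
        simp [hSfull, hyd]
    have key : ∀ (m : ℕ) (S : Finset V), S ⊆ Sfull → Sfull.card ≤ S.card + m →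
        IsSolvable (M S) := by
      intro m
      induction m with
      | zero =>
        intro S hsub hcard
        have hEq : S = Sfull := Finset.eq_of_subset_of_card_le hsub (by omega)
        subst hEq
        exact solvable_of_le hMfull hKi1
      | succ m ih =>
        intro S hsub hcard
        by_cases hc : Sfull.card ≤ S.card + m
        · exact ih S hsub hc
        · have hne' : S ≠ Sfull := by
            intro hEq; rw [hEq] at hc; omega
          obtain ⟨w, hwfull, hwS⟩ := Finset.exists_of_ssubset (hsub.ssubset_of_ne hne')
          have hwdist : Γ.dist v w ≤ i := by
            simpa [hSfull] using hwfull
          have hwD : w ∈ D S := Or.inl hwdist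
          have hle_w : M S ≤ stabilizer G w := by
            intro a ha
            exact mem_stabilizer_iff.mpr ((mem_fixingSubgroup_iff G).mp ha w hwD)
          obtain ⟨w', hww', hw'dist⟩ := f2 i w hi hwdist
          have hw'D : w' ∈ D S := Or.inl hw'dist
          set ψ : M S →* Equiv.Perm (Γ.neighborSet w) :=
            (localHom Γ hadj w).comp (Subgroup.inclusion hle_w) with hψ
          -- range of ψ is solvable
          have hrange : ψ.range ≤ Subgroup.map (localHom Γ hadj w)
              ((stabilizer G w' ⊓ stabilizer G w).subgroupOf (stabilizer G w)) := by
            rintro σ ⟨a, rfl⟩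
            refine Subgroup.mem_map.mpr ⟨⟨(a : G), hle_w a.2⟩, ?_, rfl⟩
            refine Subgroup.mem_subgroupOf.mpr ⟨?_, hle_w a.2⟩
            exact mem_stabilizer_iff.mpr ((mem_fixingSubgroup_iff G).mp a.2 w' hw'D)
          haveI hrs : Group.IsSolvable ψ.range := solvable_of_le hrange (hT w w' hww')
          -- the subgroup fixing also Γ(w)
          have hIns : M (insert w S) ≤ M S := by
            intro a ha
            rw [hM, mem_fixingSubgroup_iff] at ha
            rw [hM, mem_fixingSubgroup_iff]
            intro y hy
            refine ha y ?_
            rcases hy with hy | hy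
            · exact Or.inl hy
            · refine Or.inr ?_
              obtain ⟨z, hz, hyz⟩ := Set.mem_iUnion₂.mp hy
              exact Set.mem_iUnion₂.mpr ⟨z, Finset.mem_insert_of_mem hz, hyz⟩
          haveI hMi : Group.IsSolvable (M (insert w S)) :=
            ih (insert w S) (Finset.insert_subset hwfull hsub)
              (by rw [Finset.card_insert_of_notMem hwS]; omega)
          have hker : ψ.ker ≤ (Subgroup.inclusion hIns).range := by
            intro a ha
            rw [MonoidHom.mem_ker] at ha
            rw [Subgroup.inclusion_range, Subgroup.mem_subgroupOf]
            rw [mem_fixingSubgroup_iff]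
            intro y hy
            rcases hy with hy | hy
            · exact (mem_fixingSubgroup_iff G).mp a.2 y (Or.inl hy)
            · obtain ⟨z, hz, hyz⟩ := Set.mem_iUnion₂.mp hy
              rcases Finset.mem_insert.mp hz with hz | hz
              · subst hz
                have h1 : ψ a ⟨y, hyz⟩ = ⟨y, hyz⟩ := by rw [ha]; rfl
                have h2 : ((ψ a ⟨y, hyz⟩ : V)) = (a : G) • y := rfl
                rw [h1] at h2
                exact h2.symm
              · exact (mem_fixingSubgroup_iff G).mp a.2 y
                  (Or.inr (Set.mem_iUnion₂.mpr ⟨z, hz, hyz⟩))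
          exact solvable_of_ker_le_range (Subgroup.inclusion hIns) ψ.rangeRestrict
            (by rwa [MonoidHom.ker_rangeRestrict])
    rw [hM0]
    exact key Sfull.card ∅ (Finset.empty_subset _) (by simp)
  -- ball of radius ≥ card V is everything
  have hdistlt : ∀ x : V, Γ.dist v x < Fintype.card V := by
    intro x
    obtain ⟨p⟩ := hconn v x
    have h1 : Γ.dist v x ≤ (p.toPath : Γ.Walk v x).length := SimpleGraph.dist_le _
    have h2 : (p.toPath : Γ.Walk v x).length < Fintype.card V :=
      SimpleGraph.Walk.IsPath.length_lt p.toPath.2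
    omega
  have main : ∀ (m i : ℕ), 1 ≤ i → Fintype.card V ≤ i + m → IsSolvable (K i) := by
    intro m
    induction m with
    | zero =>
      intro i hi hcard
      have hbot : K i = ⊥ := by
        refine le_antisymm ?_ bot_le
        intro a ha
        rw [Subgroup.mem_bot]
        refine hfaith a fun x => (mem_fixingSubgroup_iff G).mp ha x ?_
        have := hdistlt x
        simp only [Set.mem_setOf_eq]
        omega
      rw [hbot]
      exact isSolvable_of_comm fun a b => by
        have ha := a.2; have hb := b.2
        rw [Subgroup.mem_bot] at ha hb
        ext
        simp [ha, hb]
    | succ m ih =>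
      intro i hi hcard
      by_cases h : Fintype.card V ≤ i + m
      · exact ih i hi h
      · exact step i hi (ih (i + 1) (by omega) (by omega))
  exact main (Fintype.card V) 1 le_rfl (by omega)

end Engine

/-- Let `Γ` be a finite connected regular graph of valency `d ≥ 3`,
`G ≤ Aut Γ` with `Γ` `(G,2)`-arc-transitive, and `{u,v}` an edge. Then the setwise
edge-stabilizer `G_{{u,v}}` is solvable iff `(G_v^{Γ(v)})_u = φ_v(G_{uv})` is solvable,
and `G_v` is solvable iff the local group `G_v^{Γ(v)}` is solvable. -/
theorem stmt_6 {V G : Type*} [Fintype V] [Group G] [MulAction G V]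
    (Γ : SimpleGraph V) (d : ℕ) (hd : 3 ≤ d)
    (hreg : ∀ w : V, (Γ.neighborSet w).ncard = d)
    (hconn : Γ.Connected)
    (hadj : ∀ (g : G) ⦃a b : V⦄, Γ.Adj a b → Γ.Adj (g • a) (g • b))
    (hfaith : ∀ g : G, (∀ x : V, g • x = x) → g = 1)
    (h2arc : ∀ ⦃v0 v1 v2 w0 w1 w2 : V⦄, Γ.Adj v0 v1 → Γ.Adj v1 v2 → v0 ≠ v2 →
      Γ.Adj w0 w1 → Γ.Adj w1 w2 → w0 ≠ w2 →
        ∃ g : G, g • v0 = w0 ∧ g • v1 = w1 ∧ g • v2 = w2)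
    {u v : V} (huv : Γ.Adj u v) :
    (IsSolvable (stabilizer G ({u, v} : Set V)) ↔
      IsSolvable (Subgroup.map (localHom Γ hadj v)
        ((stabilizer G u ⊓ stabilizer G v).subgroupOf (stabilizer G v)))) ∧
    (IsSolvable (stabilizer G v) ↔
      IsSolvable (Subgroup.map (localHom Γ hadj v) (⊤ : Subgroup (stabilizer G v)))) := by
  classical
  have hne' : u ≠ v := huv.ne
  set φ := localHom Γ hadj v with hφ
  set Kgr := (stabilizer G u ⊓ stabilizer G v).subgroupOf (stabilizer G v) with hKgr
  have hne : ∀ w : V, (Γ.neighborSet w).Nonempty := fun w =>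
    Set.nonempty_of_ncard_ne_zero (by rw [hreg]; omega)
  -- transitivity on arcs via 2-arc-transitivity
  have htrans : IsSolvable (Subgroup.map φ Kgr) →
      ∀ w w' : V, Γ.Adj w w' → IsSolvable (Subgroup.map (localHom Γ hadj w)
        ((stabilizer G w' ⊓ stabilizer G w).subgroupOf (stabilizer G w))) := by
    intro hsol w w' hww'
    obtain ⟨x, hx, hxu⟩ := Set.exists_ne_of_one_lt_ncard (by rw [hreg]; omega :
      1 < (Γ.neighborSet v).ncard) u
    obtain ⟨y, hy, hyw'⟩ := Set.exists_ne_of_one_lt_ncard (by rw [hreg]; omega :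
      1 < (Γ.neighborSet w).ncard) w'
    have hvx : Γ.Adj v x := hx
    have hwy : Γ.Adj w y := hy
    obtain ⟨g, hg1, hg2, hg3⟩ := h2arc hvx.symm huv.symm hxu hwy.symm hww' hyw'
    exact transport Γ hadj g hg2 hg3 hsol
  -- the pointwise stabilizer of the closed ball of radius 1
  have hKball : IsSolvable (Subgroup.map φ Kgr) →
      IsSolvable (fixingSubgroup G {x | Γ.dist v x ≤ 1}) := fun hsol =>
    fix_ball_solvable Γ hconn hadj hfaith v hne (htrans hsol)
  -- the kernel of φ is solvable
  have hkerφ : IsSolvable (fixingSubgroup G {x | Γ.dist v x ≤ 1}) → IsSolvable φ.ker := by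
    intro hKb
    haveI : Group.IsSolvable (fixingSubgroup G {x | Γ.dist v x ≤ 1}) := hKb
    have hsub : ∀ a : φ.ker, ((a : stabilizer G v) : G) ∈
        fixingSubgroup G {x | Γ.dist v x ≤ 1} := by
      intro a
      rw [mem_fixingSubgroup_iff]
      intro y hy
      have hy' : Γ.dist v y ≤ 1 := hy
      rcases Nat.le_one_iff_eq_zero_or_eq_one.mp hy' with h0 | h1
      · have hvy : v = y := ((hconn v y).dist_eq_zero_iff).mp h0
        subst hvy
        exact mem_stabilizer_iff.mp (a : stabilizer G v).2
      · have hyadj : y ∈ Γ.neighborSet v := SimpleGraph.dist_eq_one_iff_adj.mp h1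
        have h1' : φ (a : stabilizer G v) ⟨y, hyadj⟩ = ⟨y, hyadj⟩ := by
          rw [MonoidHom.mem_ker.mp a.2]; rfl
        have h2' : ((φ (a : stabilizer G v) ⟨y, hyadj⟩ : V)) =
            ((a : stabilizer G v) : G) • y := rfl
        rw [h1'] at h2'
        exact h2'.symm
    exact solvable_of_solvable_injective
      (f := MonoidHom.codRestrict ((stabilizer G v).subtype.comp φ.ker.subtype) _ hsub)
      (fun a b hab => by
        have h2 := congrArg Subtype.val hab
        exact Subtype.ext (Subtype.ext h2))
  -- the vertex statement
  have vertex : IsSolvable (stabilizer G v) ↔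
      IsSolvable (Subgroup.map φ (⊤ : Subgroup (stabilizer G v))) := by
    constructor
    · intro h
      haveI : Group.IsSolvable (stabilizer G v) := h
      exact solvable_map φ ⊤ (inferInstance : Group.IsSolvable (⊤ : Subgroup (stabilizer G v)))
    · intro h
      have hTvu : IsSolvable (Subgroup.map φ Kgr) :=
        solvable_of_le (Subgroup.map_mono le_top) h
      refine solvable_ker_range φ (hkerφ (hKball hTvu)) ?_
      rwa [MonoidHom.range_eq_map]
  -- membership facts for the setwise stabilizer
  have hHle : stabilizer G u ⊓ stabilizer G v ≤ stabilizer G ({u, v} : Set V) := by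
    intro a ha
    obtain ⟨hau, hav⟩ := Subgroup.mem_inf.mp ha
    rw [mem_stabilizer_iff]
    show a • ({u, v} : Set V) = {u, v}
    rw [Set.smul_set_insert, Set.smul_set_singleton, mem_stabilizer_iff.mp hau,
      mem_stabilizer_iff.mp hav]
  have heA : ∀ a : stabilizer G ({u, v} : Set V),
      ((a : G) • u = u ∧ (a : G) • v = v) ∨ ((a : G) • u = v ∧ (a : G) • v = u) := by
    intro a
    have ha : (a : G) • ({u, v} : Set V) = {u, v} := mem_stabilizer_iff.mp a.2
    have hu1 : (a : G) • u ∈ ({u, v} : Set V) := by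
      have h := Set.smul_mem_smul_set (a := (a : G)) (Set.mem_insert u {v})
      rwa [ha] at h
    have hv1 : (a : G) • v ∈ ({u, v} : Set V) := by
      have h := Set.smul_mem_smul_set (a := (a : G))
        (Set.mem_insert_iff.mpr (Or.inr rfl) : v ∈ ({u, v} : Set V))
      rwa [ha] at h
    simp only [Set.mem_insert_iff, Set.mem_singleton_iff] at hu1 hv1
    rcases hu1 with h1 | h1
    · left
      refine ⟨h1, ?_⟩
      rcases hv1 with h2 | h2
      · exact absurd (MulAction.injective (a : G) (h1.trans h2.symm)) hne'
      · exact h2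
    · right
      refine ⟨h1, ?_⟩
      rcases hv1 with h2 | h2
      · exact h2
      · exact absurd (MulAction.injective (a : G) (h1.trans h2.symm)) hne'
  -- the "sign" homomorphism on the setwise stabilizer
  let χ : stabilizer G ({u, v} : Set V) →* Multiplicative (ZMod 2) :=
    MonoidHom.mk' (fun a => if (a : G) • u = u then 1 else Multiplicative.ofAdd 1)
      (by
        intro a b
        have hab : ((a * b : stabilizer G ({u, v} : Set V)) : G) • u =
            (a : G) • ((b : G) • u) := by rw [Subgroup.coe_mul, mul_smul]
        show (if ((a * b : stabilizer G ({u, v} : Set V)) : G) • u = u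
            then (1 : Multiplicative (ZMod 2)) else Multiplicative.ofAdd 1) =
          (if (a : G) • u = u then (1 : Multiplicative (ZMod 2)) else Multiplicative.ofAdd 1) *
          (if (b : G) • u = u then (1 : Multiplicative (ZMod 2)) else Multiplicative.ofAdd 1)
        rcases heA a with ⟨ha1, ha2⟩ | ⟨ha1, ha2⟩ <;> rcases heA b with ⟨hb1, hb2⟩ | ⟨hb1, hb2⟩
        · rw [if_pos (show ((a * b : stabilizer G ({u, v} : Set V)) : G) • u = u by
              rw [hab, hb1, ha1]), if_pos ha1, if_pos hb1, mul_one]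
        · rw [if_neg (show ¬((a * b : stabilizer G ({u, v} : Set V)) : G) • u = u by
              rw [hab, hb1, ha2]; exact hne'.symm), if_pos ha1,
            if_neg (show ¬(b : G) • u = u by rw [hb1]; exact hne'.symm), one_mul]
        · rw [if_neg (show ¬((a * b : stabilizer G ({u, v} : Set V)) : G) • u = u by
              rw [hab, hb1, ha1]; exact hne'.symm),
            if_neg (show ¬(a : G) • u = u by rw [ha1]; exact hne'.symm), if_pos hb1, mul_one]
        · rw [if_pos (show ((a * b : stabilizer G ({u, v} : Set V)) : G) • u = u by
              rw [hab, hb1, ha2]),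
            if_neg (show ¬(a : G) • u = u by rw [ha1]; exact hne'.symm),
            if_neg (show ¬(b : G) • u = u by rw [hb1]; exact hne'.symm)]
          decide)
  have hχ_apply : ∀ a : stabilizer G ({u, v} : Set V),
      χ a = if (a : G) • u = u then 1 else Multiplicative.ofAdd 1 := fun a => rfl
  have hkerχ : ∀ a : χ.ker, ((a : stabilizer G ({u, v} : Set V)) : G) ∈
      stabilizer G u ⊓ stabilizer G v := by
    intro a
    have ha : χ (a : stabilizer G ({u, v} : Set V)) = 1 := MonoidHom.mem_ker.mp a.2
    rcases heA (a : stabilizer G ({u, v} : Set V)) with ⟨h1, h2⟩ | ⟨h1, h2⟩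
    · exact Subgroup.mem_inf.mpr ⟨mem_stabilizer_iff.mpr h1, mem_stabilizer_iff.mpr h2⟩
    · exfalso
      have hx : χ (a : stabilizer G ({u, v} : Set V)) = Multiplicative.ofAdd 1 := by
        rw [hχ_apply]
        exact if_neg (by rw [h1]; exact hne'.symm)
      rw [ha] at hx
      exact absurd hx (by decide)
  -- the equivalence between Kgr and stabilizer G u ⊓ stabilizer G v
  have eK : Kgr ≃* (stabilizer G u ⊓ stabilizer G v : Subgroup G) :=
    Subgroup.subgroupOfEquivOfLe inf_le_right
  -- edge statement, backward direction
  have hedge_back : IsSolvable (Subgroup.map φ Kgr) →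
      IsSolvable (stabilizer G ({u, v} : Set V)) := by
    intro hs
    haveI hkφ : Group.IsSolvable φ.ker := hkerφ (hKball hs)
    -- the restriction of φ to Kgr
    have hker_ρ : IsSolvable (φ.comp Kgr.subtype).ker := by
      have hsub : ∀ a : (φ.comp Kgr.subtype).ker, ((a : Kgr) : stabilizer G v) ∈ φ.ker :=
        fun a => MonoidHom.mem_ker.mpr (MonoidHom.mem_ker.mp a.2)
      exact solvable_of_solvable_injective
        (f := MonoidHom.codRestrict (Kgr.subtype.comp (φ.comp Kgr.subtype).ker.subtype) _ hsub)
        (fun a b hab => by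
          have h2 := congrArg Subtype.val hab
          exact Subtype.ext (Subtype.ext h2))
    have hKsolv : IsSolvable Kgr :=
      solvable_ker_range (φ.comp Kgr.subtype) hker_ρ
        (by rw [← map_eq_range_comp]; exact hs)
    haveI hH : Group.IsSolvable (stabilizer G u ⊓ stabilizer G v : Subgroup G) := by
      haveI : Group.IsSolvable Kgr := hKsolv
      exact solvable_of_solvable_injective (f := eK.symm.toMonoidHom) eK.symm.injective
    haveI hkerχs : Group.IsSolvable χ.ker :=
      solvable_of_solvable_injective
        (f := MonoidHom.codRestrict
          ((stabilizer G ({u, v} : Set V)).subtype.comp χ.ker.subtype) _ hkerχ)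
        (fun a b hab => by
          have h2 := congrArg Subtype.val hab
          exact Subtype.ext (Subtype.ext h2))
    haveI hrangeχ : Group.IsSolvable χ.range := inferInstance
    exact solvable_ker_range χ hkerχs hrangeχ
  -- edge statement, forward direction
  have hedge_fwd : IsSolvable (stabilizer G ({u, v} : Set V)) →
      IsSolvable (Subgroup.map φ Kgr) := by
    intro hA
    have hH : IsSolvable (stabilizer G u ⊓ stabilizer G v : Subgroup G) :=
      solvable_of_le hHle hA
    have hK : IsSolvable Kgr := by
      haveI : Group.IsSolvable (stabilizer G u ⊓ stabilizer G v : Subgroup G) := hH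
      exact solvable_of_solvable_injective (f := eK.toMonoidHom) eK.injective
    exact solvable_map φ Kgr hK
  exact ⟨⟨hedge_fwd, hedge_back⟩, vertex⟩

end Stmt6
end

section
/- Let Γ be a finite connected regular simple graph of valency d ≥ 3, let G ≤ Aut(Γ) with Γ (G,2)-arc-transitive, let {u,v} be an edge of Γ, and let r be a prime dividing d. Then G_{uv} has no nontrivial normal r-subgroup, and G_v^{[1]} has no nontrivial normal r-subgroup; that is, O_r(G_v^{[1]}) = 1 = O_r(G_{uv}). -/
open MulAction

namespace Stmt7

/-- The kernel `G_v^{[1]}` of the action of `G_v` on the neighborhood `Γ(v)`,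
as a subgroup of `G`: the elements fixing `v` and all its neighbors. -/
def kernel1 {V : Type*} (Γ : SimpleGraph V) (G : Type*) [Group G] [MulAction G V] (v : V) :
    Subgroup G :=
  stabilizer G v ⊓ ⨅ w ∈ Γ.neighborSet v, stabilizer G w

section Aux

variable {V G : Type*} [Group G] [MulAction G V]

lemma mem_kernel1 {Γ : SimpleGraph V} {v : V} {g : G} :
    g ∈ kernel1 Γ G v ↔ g • v = v ∧ ∀ w, Γ.Adj v w → g • w = w := by
  simp [kernel1, Subgroup.mem_inf, Subgroup.mem_iInf, SimpleGraph.mem_neighborSet,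
    mem_stabilizer_iff]

variable {Γ : SimpleGraph V}

lemma smul_adj_iff (hadj : ∀ (g : G) ⦃a b : V⦄, Γ.Adj a b → Γ.Adj (g • a) (g • b))
    (g : G) {a b : V} : Γ.Adj (g • a) (g • b) ↔ Γ.Adj a b := by
  refine ⟨fun h => ?_, fun h => hadj g h⟩
  simpa using hadj g⁻¹ h

/-- conjugate of a subgroup -/
def cj (g : G) (N : Subgroup G) : Subgroup G := N.map (MulAut.conj g).toMonoidHom

lemma mem_cj {g x : G} {N : Subgroup G} : x ∈ cj g N ↔ g⁻¹ * x * g ∈ N := by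
  constructor
  · rintro ⟨n, hn, rfl⟩
    simpa [mul_assoc] using hn
  · intro h
    exact ⟨g⁻¹ * x * g, h, by simp [mul_assoc]⟩

lemma cj_kernel1 (hadj : ∀ (g : G) ⦃a b : V⦄, Γ.Adj a b → Γ.Adj (g • a) (g • b))
    (g : G) (v : V) : cj g (kernel1 Γ G v) = kernel1 Γ G (g • v) := by
  ext x
  rw [mem_cj, mem_kernel1, mem_kernel1]
  constructor
  · rintro ⟨h1, h2⟩
    constructor
    · have := congrArg (g • ·) h1
      simpa [smul_smul, mul_assoc] using this
    · intro w hw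
      have hw' : Γ.Adj v (g⁻¹ • w) := by
        rw [← smul_adj_iff hadj g]; simpa using hw
      have := congrArg (g • ·) (h2 _ hw')
      simpa [smul_smul, mul_assoc] using this
  · rintro ⟨h1, h2⟩
    constructor
    · have : x • g • v = g • v := h1
      have := congrArg (g⁻¹ • ·) this
      simpa [smul_smul, mul_assoc] using this
    · intro w hw
      have hw' : Γ.Adj (g • v) (g • w) := by rw [smul_adj_iff hadj]; exact hw
      have := congrArg (g⁻¹ • ·) (h2 _ hw')
      simpa [smul_smul, mul_assoc] using this

end Aux

/-- Candidates for `O_r(G_x^{[1]})`, viewed as subgroups of `G`. -/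
def Sr {V : Type*} (Γ : SimpleGraph V) (G : Type*) [Group G] [MulAction G V] (r : ℕ) (x : V) :
    Set (Subgroup G) :=
  {N | N ≤ kernel1 Γ G x ∧ IsPGroup r N ∧ ∀ g ∈ kernel1 Γ G x, cj g N ≤ N}

/-- `O_r(G_x^{[1]})` as a subgroup of `G`. -/
def Mr {V : Type*} (Γ : SimpleGraph V) (G : Type*) [Group G] [MulAction G V] (r : ℕ) (x : V) :
    Subgroup G := sSup (Sr Γ G r x)

section Aux2

variable {V G : Type*} [Group G] [MulAction G V] {Γ : SimpleGraph V} {r : ℕ}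

lemma bot_mem_Sr (x : V) : (⊥ : Subgroup G) ∈ Sr Γ G r x :=
  ⟨bot_le, IsPGroup.of_bot, fun g _ => by
    intro y hy
    rw [mem_cj] at hy
    simp only [Subgroup.mem_bot] at hy ⊢
    have := congrArg (fun z => g * z * g⁻¹) hy
    simpa [mul_assoc] using this⟩

lemma sup_mem_Sr {x : V} {N₁ N₂ : Subgroup G} (h₁ : N₁ ∈ Sr Γ G r x) (h₂ : N₂ ∈ Sr Γ G r x) :
    N₁ ⊔ N₂ ∈ Sr Γ G r x := by
  obtain ⟨hle₁, hp₁, hn₁⟩ := h₁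
  obtain ⟨hle₂, hp₂, hn₂⟩ := h₂
  refine ⟨sup_le hle₁ hle₂, ?_, ?_⟩
  · refine IsPGroup.to_sup_of_normal_right' hp₁ hp₂ ?_
    intro n hn
    rw [Subgroup.mem_normalizer_iff]
    intro h
    constructor
    · intro hh
      exact hn₂ n (hle₁ hn) (mem_cj.2 (by simpa [mul_assoc] using hh))
    · intro hh
      have : n⁻¹ * (n * h * n⁻¹) * n ∈ N₂ := hn₂ n⁻¹ (Subgroup.inv_mem _ (hle₁ hn))
        (mem_cj.2 (by simpa [mul_assoc] using hh))
      simpa [mul_assoc] using this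
  · intro g hg
    have : cj g (N₁ ⊔ N₂) = cj g N₁ ⊔ cj g N₂ := by
      simp [cj, Subgroup.map_sup]
    rw [this]
    exact sup_le ((hn₁ g hg).trans le_sup_left) ((hn₂ g hg).trans le_sup_right)

lemma cj_mem_Sr (hadj : ∀ (g : G) ⦃a b : V⦄, Γ.Adj a b → Γ.Adj (g • a) (g • b))
    {x : V} {N : Subgroup G} (hN : N ∈ Sr Γ G r x) (g : G) :
    cj g N ∈ Sr Γ G r (g • x) := by
  obtain ⟨hle, hp, hn⟩ := hN
  refine ⟨?_, hp.map _, ?_⟩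
  · intro y hy
    rw [← cj_kernel1 hadj g x]
    exact Subgroup.map_mono hle hy
  · intro h hh y hy
    rw [mem_cj] at hy ⊢
    have hh' : g⁻¹ * h * g ∈ kernel1 Γ G x := by
      have : g⁻¹ * h * g ∈ cj g⁻¹ (kernel1 Γ G (g • x)) := mem_cj.2 (by
        simpa [mul_assoc] using hh)
      rw [cj_kernel1 hadj g⁻¹ (g • x)] at this
      simpa using this
    have hm : g⁻¹ * (h⁻¹ * y * h) * g ∈ N := mem_cj.1 hy
    have key : (g⁻¹*h*g)⁻¹ * (g⁻¹ * y * g) * (g⁻¹*h*g) = g⁻¹ * (h⁻¹ * y * h) * g := by group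
    have : g⁻¹ * y * g ∈ cj (g⁻¹*h*g) N := mem_cj.2 (by rw [key]; exact hm)
    exact hn _ hh' this

lemma Mr_spec [Finite G] (hadj : ∀ (g : G) ⦃a b : V⦄, Γ.Adj a b → Γ.Adj (g • a) (g • b))
    (x : V) : Mr Γ G r x ∈ Sr Γ G r x := by
  obtain ⟨M, hM, hmax⟩ := Set.Finite.exists_maximalFor id (Sr Γ G r x) (Set.toFinite _)
    ⟨⊥, bot_mem_Sr x⟩
  have hgr : ∀ N ∈ Sr Γ G r x, N ≤ M := by
    intro N hN
    have := hmax (sup_mem_Sr hN hM) (le_sup_right : M ≤ N ⊔ M)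
    simp only [id] at this
    exact le_sup_left.trans this
  have : Mr Γ G r x = M := le_antisymm (sSup_le hgr) (le_sSup hM)
  rw [this]; exact hM

lemma le_Mr {x : V} {N : Subgroup G} (hN : N ∈ Sr Γ G r x) : N ≤ Mr Γ G r x := le_sSup hN

lemma cj_Mr [Finite G] (hadj : ∀ (g : G) ⦃a b : V⦄, Γ.Adj a b → Γ.Adj (g • a) (g • b))
    (g : G) (x : V) : cj g (Mr Γ G r x) = Mr Γ G r (g • x) := by
  refine le_antisymm (le_Mr (cj_mem_Sr hadj (Mr_spec hadj x) g)) ?_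
  have h0 : cj g⁻¹ (Mr Γ G r (g • x)) ∈ Sr Γ G r x := by
    have h1 := cj_mem_Sr (r := r) hadj (Mr_spec (r := r) hadj (g • x)) g⁻¹
    simpa using h1
  have h2 : cj g⁻¹ (Mr Γ G r (g • x)) ≤ Mr Γ G r x := le_Mr h0
  intro y hy
  rw [mem_cj]
  apply h2
  rw [mem_cj]
  simpa [mul_assoc] using hy

end Aux2


section Main

variable {V G : Type*} [Fintype V] [Group G] [MulAction G V] {Γ : SimpleGraph V}

/-- A fixed point of an `r`-subgroup acting on an invariant set of size prime to `r`. -/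
lemma exists_fixed_in {r : ℕ} [Fact r.Prime] {H : Subgroup G} (hH : IsPGroup r H)
    {s : Set V} (hcl : ∀ h ∈ H, ∀ y ∈ s, h • y ∈ s) (hcard : ¬ r ∣ s.ncard) :
    ∃ y ∈ s, ∀ h ∈ H, h • y = y := by
  letI : SMul H s := ⟨fun h y => ⟨(h : G) • (y : V), hcl h h.2 y y.2⟩⟩
  letI : MulAction H s :=
    { one_smul := fun y => Subtype.ext (by
        show ((1 : H) : G) • (y : V) = (y : V); simp)
      mul_smul := fun a b y => Subtype.ext (by
        show ((a * b : H) : G) • (y : V) = (a : G) • ((b : G) • (y : V))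
        rw [Subgroup.coe_mul, mul_smul]) }
  have hne : ¬ r ∣ Nat.card s := by rwa [Nat.card_coe_set_eq]
  obtain ⟨⟨y, hy⟩, hfix⟩ := hH.nonempty_fixed_point_of_prime_not_dvd_card s hne
  refine ⟨y, hy, fun h hh => ?_⟩
  have := (MulAction.mem_fixedPoints).1 hfix ⟨h, hh⟩
  exact congrArg Subtype.val this

/-- The key local analysis: an `r`-subgroup fixing both ends of an edge `xw`, normalized by
the stabilizer of the arc, fixes all of `Γ(w)` pointwise. -/
lemma fixes_other
    (hadj : ∀ (g : G) ⦃a b : V⦄, Γ.Adj a b → Γ.Adj (g • a) (g • b))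
    (h2arc : ∀ ⦃v0 v1 v2 w0 w1 w2 : V⦄, Γ.Adj v0 v1 → Γ.Adj v1 v2 → v0 ≠ v2 →
      Γ.Adj w0 w1 → Γ.Adj w1 w2 → w0 ≠ w2 →
        ∃ g : G, g • v0 = w0 ∧ g • v1 = w1 ∧ g • v2 = w2)
    {d r : ℕ} (hd : 3 ≤ d) (hreg : ∀ w : V, (Γ.neighborSet w).ncard = d)
    (hr : r.Prime) (hrd : r ∣ d) {x w : V} (hxw : Γ.Adj x w) {H : Subgroup G}
    (hH : IsPGroup r H) (hHx : ∀ h ∈ H, h • x = x) (hHw : ∀ h ∈ H, h • w = w)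
    (hnorm : ∀ g : G, g • x = x → g • w = w → cj g H ≤ H) :
    ∀ y, Γ.Adj w y → ∀ h ∈ H, h • y = y := by
  haveI := Fact.mk hr
  set s : Set V := Γ.neighborSet w \ {x} with hs
  have hxmem : x ∈ Γ.neighborSet w := hxw.symm
  have hcard : s.ncard = d - 1 := by
    rw [hs, Set.ncard_diff_singleton_of_mem hxmem, hreg]
  have hnd : ¬ r ∣ s.ncard := by
    rw [hcard]
    intro hdvd
    have h1 : r ∣ d - (d - 1) := Nat.dvd_sub hrd hdvd
    have h2 : d - (d - 1) = 1 := by omega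
    rw [h2] at h1
    have := Nat.le_of_dvd one_pos h1
    have := hr.two_le
    omega
  have hcl : ∀ h ∈ H, ∀ y ∈ s, h • y ∈ s := by
    intro h hh y hy
    obtain ⟨hyadj, hyx⟩ := hy
    have hyadj' : Γ.Adj w y := hyadj
    refine ⟨?_, ?_⟩
    · have := hadj h hyadj'
      rw [hHw h hh] at this
      exact this
    · simp only [Set.mem_singleton_iff] at hyx ⊢
      intro heq
      apply hyx
      have hinv : h⁻¹ • x = x := hHx h⁻¹ (Subgroup.inv_mem _ hh)
      calc y = h⁻¹ • (h • y) := by simp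
        _ = h⁻¹ • x := by rw [heq]
        _ = x := hinv
  obtain ⟨y₀, hy₀, hfix₀⟩ := exists_fixed_in hH hcl hnd
  intro y hwy h hh
  by_cases hyx : y = x
  · rw [hyx]; exact hHx h hh
  · obtain ⟨hy₀adj, hy₀x⟩ := hy₀
    have hy₀adj' : Γ.Adj w y₀ := hy₀adj
    have hy₀x' : x ≠ y₀ := fun e => hy₀x (by simp [e.symm])
    obtain ⟨g, hg1, hg2, hg3⟩ := h2arc hxw hy₀adj' hy₀x' hxw hwy (Ne.symm hyx)
    have hginvx : g⁻¹ • x = x := by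
      have := congrArg (fun z => g⁻¹ • z) hg1
      simpa using this.symm
    have hginvw : g⁻¹ • w = w := by
      have := congrArg (fun z => g⁻¹ • z) hg2
      simpa using this.symm
    have hk : g⁻¹ * h * g ∈ H := by
      apply hnorm g⁻¹ hginvx hginvw
      rw [mem_cj]
      have : (g⁻¹)⁻¹ * (g⁻¹ * h * g) * g⁻¹ = h := by group
      rw [this]; exact hh
    calc h • y = h • (g • y₀) := by rw [hg3]
      _ = g • ((g⁻¹ * h * g) • y₀) := by
          rw [smul_smul, smul_smul]; congr 1; group
      _ = g • y₀ := by rw [hfix₀ _ hk]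
      _ = y := hg3

lemma Mr_le_kernel_adj [Finite G]
    (hadj : ∀ (g : G) ⦃a b : V⦄, Γ.Adj a b → Γ.Adj (g • a) (g • b))
    (h2arc : ∀ ⦃v0 v1 v2 w0 w1 w2 : V⦄, Γ.Adj v0 v1 → Γ.Adj v1 v2 → v0 ≠ v2 →
      Γ.Adj w0 w1 → Γ.Adj w1 w2 → w0 ≠ w2 →
        ∃ g : G, g • v0 = w0 ∧ g • v1 = w1 ∧ g • v2 = w2)
    {d r : ℕ} (hd : 3 ≤ d) (hreg : ∀ w : V, (Γ.neighborSet w).ncard = d)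
    (hr : r.Prime) (hrd : r ∣ d) {x w : V} (hxw : Γ.Adj x w) :
    Mr Γ G r x ≤ kernel1 Γ G w := by
  have hspec := Mr_spec (r := r) hadj x
  have hfix : ∀ h ∈ Mr Γ G r x, h • x = x ∧ ∀ y, Γ.Adj x y → h • y = y :=
    fun h hh => mem_kernel1.1 (hspec.1 hh)
  have hHx : ∀ h ∈ Mr Γ G r x, h • x = x := fun h hh => (hfix h hh).1
  have hHw : ∀ h ∈ Mr Γ G r x, h • w = w := fun h hh => (hfix h hh).2 w hxw
  have hnorm : ∀ g : G, g • x = x → g • w = w → cj g (Mr Γ G r x) ≤ Mr Γ G r x := by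
    intro g hgx _
    rw [cj_Mr hadj g x, hgx]
  have hall := fixes_other hadj h2arc hd hreg hr hrd hxw hspec.2.1 hHx hHw hnorm
  intro h hh
  rw [mem_kernel1]
  exact ⟨hHw h hh, fun y hy => hall y hy h hh⟩

lemma exists_smul_eq'
    (h2arc : ∀ ⦃v0 v1 v2 w0 w1 w2 : V⦄, Γ.Adj v0 v1 → Γ.Adj v1 v2 → v0 ≠ v2 →
      Γ.Adj w0 w1 → Γ.Adj w1 w2 → w0 ≠ w2 →
        ∃ g : G, g • v0 = w0 ∧ g • v1 = w1 ∧ g • v2 = w2)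
    {d : ℕ} (hd : 3 ≤ d) (hreg : ∀ w : V, (Γ.neighborSet w).ncard = d)
    (x w : V) : ∃ g : G, g • x = w := by
  have two_nbrs : ∀ z : V, ∃ a b, Γ.Adj z a ∧ Γ.Adj z b ∧ a ≠ b := by
    intro z
    have h1 : 1 < (Γ.neighborSet z).ncard := by rw [hreg]; omega
    rw [Set.one_lt_ncard (Set.toFinite _)] at h1
    obtain ⟨a, ha, b, hb, hab⟩ := h1
    exact ⟨a, b, ha, hb, hab⟩
  obtain ⟨a, b, ha, hb, hab⟩ := two_nbrs x
  obtain ⟨c, e, hc, he, hce⟩ := two_nbrs w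
  obtain ⟨g, _, hg, _⟩ := h2arc ha.symm hb hab hc.symm he hce
  exact ⟨g, hg⟩

lemma Mr_eq_adj [Finite G]
    (hadj : ∀ (g : G) ⦃a b : V⦄, Γ.Adj a b → Γ.Adj (g • a) (g • b))
    (h2arc : ∀ ⦃v0 v1 v2 w0 w1 w2 : V⦄, Γ.Adj v0 v1 → Γ.Adj v1 v2 → v0 ≠ v2 →
      Γ.Adj w0 w1 → Γ.Adj w1 w2 → w0 ≠ w2 →
        ∃ g : G, g • v0 = w0 ∧ g • v1 = w1 ∧ g • v2 = w2)
    {d r : ℕ} (hd : 3 ≤ d) (hreg : ∀ w : V, (Γ.neighborSet w).ncard = d)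
    (hr : r.Prime) (hrd : r ∣ d) {x w : V} (hxw : Γ.Adj x w) :
    Mr Γ G r x = Mr Γ G r w := by
  have hspec := Mr_spec (r := r) hadj x
  have h1 : Mr Γ G r x ∈ Sr Γ G r w := by
    refine ⟨Mr_le_kernel_adj hadj h2arc hd hreg hr hrd hxw, hspec.2.1, ?_⟩
    intro g hg
    have hgx : g • x = x := (mem_kernel1.1 hg).2 x hxw.symm
    rw [cj_Mr hadj, hgx]
  have hle : Mr Γ G r x ≤ Mr Γ G r w := le_Mr h1
  obtain ⟨g, hg⟩ := exists_smul_eq' (G := G) h2arc hd hreg x w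
  have hcardeq : Nat.card (Mr Γ G r w) = Nat.card (Mr Γ G r x) := by
    rw [← hg, ← cj_Mr hadj g x]
    exact (Nat.card_congr (Subgroup.equivMapOfInjective (Mr Γ G r x)
      (MulAut.conj g).toMonoidHom (MulAut.conj g).injective).toEquiv).symm
  exact Subgroup.eq_of_le_of_card_ge hle hcardeq.le

lemma map_subtype_norm {J : Subgroup G} {N : Subgroup J} (hN : N.Normal) :
    ∀ g ∈ J, cj g (N.map J.subtype) ≤ N.map J.subtype := by
  intro g hg y hy
  rw [mem_cj] at hy
  obtain ⟨m, hm, hmeq⟩ := hy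
  refine ⟨(⟨g, hg⟩ : J) * m * (⟨g, hg⟩ : J)⁻¹, hN.conj_mem m hm _, ?_⟩
  have : J.subtype ((⟨g, hg⟩ : J) * m * (⟨g, hg⟩ : J)⁻¹) = g * (J.subtype m) * g⁻¹ := by
    simp
  rw [this, hmeq]
  group

lemma Mr_eq_of_reachable [Finite G]
    (hadj : ∀ (g : G) ⦃a b : V⦄, Γ.Adj a b → Γ.Adj (g • a) (g • b))
    (h2arc : ∀ ⦃v0 v1 v2 w0 w1 w2 : V⦄, Γ.Adj v0 v1 → Γ.Adj v1 v2 → v0 ≠ v2 →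
      Γ.Adj w0 w1 → Γ.Adj w1 w2 → w0 ≠ w2 →
        ∃ g : G, g • v0 = w0 ∧ g • v1 = w1 ∧ g • v2 = w2)
    {d r : ℕ} (hd : 3 ≤ d) (hreg : ∀ w : V, (Γ.neighborSet w).ncard = d)
    (hr : r.Prime) (hrd : r ∣ d) {x w : V} (hxw : Γ.Reachable x w) :
    Mr Γ G r x = Mr Γ G r w := by
  obtain ⟨p⟩ := hxw
  induction p with
  | nil => rfl
  | cons he q ih => rw [Mr_eq_adj hadj h2arc hd hreg hr hrd he]; exact ih

end Main


/-- Let `Γ` be a finite connected regular graph of valency `d ≥ 3`,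
`G ≤ Aut Γ` with `Γ` `(G,2)`-arc-transitive, `{u,v}` an edge, and `r` a prime dividing
`d`. Then `O_r(G_v^{[1]}) = 1 = O_r(G_{uv})`: neither `G_{uv}` nor `G_v^{[1]}` has a
nontrivial normal `r`-subgroup. -/
theorem stmt_7 {V G : Type*} [Fintype V] [Group G] [MulAction G V]
    (Γ : SimpleGraph V) (d : ℕ) (hd : 3 ≤ d)
    (hreg : ∀ w : V, (Γ.neighborSet w).ncard = d)
    (hconn : Γ.Connected)
    (hadj : ∀ (g : G) ⦃a b : V⦄, Γ.Adj a b → Γ.Adj (g • a) (g • b))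
    (hfaith : ∀ g : G, (∀ x : V, g • x = x) → g = 1)
    (h2arc : ∀ ⦃v0 v1 v2 w0 w1 w2 : V⦄, Γ.Adj v0 v1 → Γ.Adj v1 v2 → v0 ≠ v2 →
      Γ.Adj w0 w1 → Γ.Adj w1 w2 → w0 ≠ w2 →
        ∃ g : G, g • v0 = w0 ∧ g • v1 = w1 ∧ g • v2 = w2)
    {u v : V} (huv : Γ.Adj u v)
    (r : ℕ) (hr : r.Prime) (hrd : r ∣ d) :
    (∀ N : Subgroup (stabilizer G u ⊓ stabilizer G v : Subgroup G),
      N.Normal → IsPGroup r N → N = ⊥) ∧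
    (∀ N : Subgroup (kernel1 Γ G v), N.Normal → IsPGroup r N → N = ⊥) := by
  haveI : Finite G := by
    apply Finite.of_injective (fun g : G => (fun x => g • x : V → V))
    intro g₁ g₂ h
    have h1 : ∀ x : V, (g₂⁻¹ * g₁) • x = x := by
      intro x
      have hx : g₁ • x = g₂ • x := congrFun h x
      rw [mul_smul, hx, inv_smul_smul]
    have := hfaith _ h1
    rwa [inv_mul_eq_one, eq_comm] at this
  haveI := Fact.mk hr
  -- All the groups `O_r(G_x^{[1]})` coincide, and hence are trivial.
  have hMreq : ∀ x : V, Mr Γ G r x = Mr Γ G r v := by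
    intro x
    exact Mr_eq_of_reachable hadj h2arc hd hreg hr hrd (hconn.preconnected x v)
  have hMrbot : Mr Γ G r v = ⊥ := by
    rw [eq_bot_iff]
    intro h hh
    have hfixall : ∀ x : V, h • x = x := by
      intro x
      have hx : h ∈ Mr Γ G r x := by rw [hMreq x]; exact hh
      exact (mem_kernel1.1 ((Mr_spec (r := r) hadj x).1 hx)).1
    simp only [Subgroup.mem_bot]
    exact hfaith h hfixall
  -- Common final step: a subgroup of `G` lying in `Sr Γ G r v` is trivial.
  have hSr_bot : ∀ P : Subgroup G, P ∈ Sr Γ G r v → P = ⊥ := by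
    intro P hP
    have := le_Mr hP
    rw [hMrbot] at this
    exact le_bot_iff.1 this
  have hmap_bot : ∀ (J : Subgroup G) (N : Subgroup J), N.map J.subtype = ⊥ → N = ⊥ := by
    intro J N hN
    rw [eq_bot_iff]
    intro n hn
    have : J.subtype n ∈ N.map J.subtype := Subgroup.mem_map_of_mem _ hn
    rw [hN, Subgroup.mem_bot] at this
    have : (n : J) = 1 := Subtype.ext this
    simpa [this] using Subgroup.one_mem (⊥ : Subgroup J)
  constructor
  · -- the edge stabilizer part
    intro N hNnormal hNp
    apply hmap_bot (stabilizer G u ⊓ stabilizer G v) N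
    apply hSr_bot
    have hN'p : IsPGroup r (N.map (stabilizer G u ⊓ stabilizer G v : Subgroup G).subtype) :=
      hNp.map _
    set N' : Subgroup G := N.map (stabilizer G u ⊓ stabilizer G v : Subgroup G).subtype with hN'
    have hN'le : N' ≤ stabilizer G u ⊓ stabilizer G v := Subgroup.map_subtype_le N
    have hnorm' : ∀ g ∈ (stabilizer G u ⊓ stabilizer G v : Subgroup G), cj g N' ≤ N' :=
      map_subtype_norm hNnormal
    have hfixu : ∀ h ∈ N', h • u = u := fun h hh =>
      mem_stabilizer_iff.1 (Subgroup.mem_inf.1 (hN'le hh)).1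
    have hfixv : ∀ h ∈ N', h • v = v := fun h hh =>
      mem_stabilizer_iff.1 (Subgroup.mem_inf.1 (hN'le hh)).2
    have hnorm'' : ∀ g : G, g • u = u → g • v = v → cj g N' ≤ N' := fun g hgu hgv =>
      hnorm' g (Subgroup.mem_inf.2 ⟨mem_stabilizer_iff.2 hgu, mem_stabilizer_iff.2 hgv⟩)
    have hall := fixes_other hadj h2arc hd hreg hr hrd huv hN'p hfixu hfixv hnorm''
    have hN'K : N' ≤ kernel1 Γ G v := by
      intro h hh
      exact mem_kernel1.2 ⟨hfixv h hh, fun y hy => hall y hy h hh⟩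
    refine ⟨hN'K, hN'p, ?_⟩
    intro g hg
    have hk := mem_kernel1.1 hg
    exact hnorm' g (Subgroup.mem_inf.2 ⟨mem_stabilizer_iff.2 (hk.2 u huv.symm),
      mem_stabilizer_iff.2 hk.1⟩)
  · -- the kernel part
    intro N hNnormal hNp
    apply hmap_bot (kernel1 Γ G v) N
    apply hSr_bot
    exact ⟨Subgroup.map_subtype_le N, hNp.map _, map_subtype_norm hNnormal⟩

end Stmt7
end

section
/- Let G be a finite group acting faithfully, transitively and primitively on a finite set Ω with |Ω| ≥ 2 (equivalently, the action is faithful and transitive and each point stabilizer is a maximal subgroup of G). Let ω ∈ Ω, let H = G_ω be the stabilizer of ω, and let p be a prime. If P is a Sylow p-subgroup of H with P ≠ 1 and P normal in H, then P is a Sylow p-subgroup of G. -/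
open MulAction

/-- Let `G` be a finite group acting faithfully, transitively and
primitively on a finite set `Ω` with `|Ω| ≥ 2` (primitivity being encoded by the point
stabilizers being maximal subgroups). Let `ω ∈ Ω`, `H = G_ω`, and `p` a prime. If `P`
is a nontrivial normal Sylow `p`-subgroup of `H`, then `P` is a Sylow `p`-subgroup
of `G`. -/
theorem stmt_11 {G Ω : Type*} [Group G] [Finite G] [MulAction G Ω] [Finite Ω]
    (hfaith : ∀ g : G, (∀ x : Ω, g • x = x) → g = 1)
    (htrans : MulAction.IsPretransitive G Ω)
    (hprim : ∀ x : Ω, IsCoatom (stabilizer G x))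
    (hcard : 2 ≤ Nat.card Ω)
    (ω : Ω) (p : ℕ) [Fact p.Prime]
    (P : Sylow p (stabilizer G ω))
    (hP1 : (P : Subgroup (stabilizer G ω)) ≠ ⊥)
    (hPnormal : (P : Subgroup (stabilizer G ω)).Normal) :
    ∃ Q : Sylow p G,
      (Q : Subgroup G) =
        Subgroup.map (stabilizer G ω).subtype (P : Subgroup (stabilizer G ω)) := by
  set P' : Subgroup G :=
    Subgroup.map (stabilizer G ω).subtype (P : Subgroup (stabilizer G ω)) with hP'def
  have hP'pg : IsPGroup p P' := by
    rw [hP'def]; exact P.isPGroup'.map (stabilizer G ω).subtype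
  have hP'leH : P' ≤ stabilizer G ω := by
    rintro g ⟨k, hk, rfl⟩; exact k.2
  -- the stabilizer normalizes P'
  have hHle : stabilizer G ω ≤ Subgroup.normalizer (P' : Set G) := by
    intro h hh
    rw [Subgroup.mem_normalizer_iff]
    intro g
    constructor
    · rintro ⟨k, hk, rfl⟩
      refine ⟨⟨h, hh⟩ * k * ⟨h, hh⟩⁻¹, hPnormal.conj_mem k hk ⟨h, hh⟩, rfl⟩
    · rintro ⟨k, hk, hkeq⟩
      refine ⟨⟨h, hh⟩⁻¹ * k * ⟨h, hh⟩, ?_, ?_⟩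
      · have := hPnormal.conj_mem k hk ⟨h, hh⟩⁻¹; simp only [inv_inv] at this; exact this
      · have : (k : G) = h * g * h⁻¹ := hkeq
        simp [Subgroup.coe_subtype, this]
        group
  obtain ⟨Q, hPQ⟩ := hP'pg.exists_le_sylow
  refine ⟨Q, ?_⟩
  by_contra hne
  have hlt : P' < (Q : Subgroup G) := lt_of_le_of_ne hPQ fun h => hne h.symm
  rcases eq_or_lt_of_le hHle with hN | hN
  · -- the stabilizer equals the normalizer of P'
    set R : Subgroup (Q : Subgroup G) := P'.subgroupOf (Q : Subgroup G) with hRdef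
    have hmapR : Subgroup.map (Q : Subgroup G).subtype R = P' := by
      rw [hRdef, Subgroup.subgroupOf_map_subtype, inf_eq_left]
      exact hPQ
    have hRlt : R < ⊤ := by
      rcases lt_or_eq_of_le (le_top : R ≤ ⊤) with h | h
      · exact h
      · exfalso
        have := Subgroup.subgroupOf_eq_top.mp h
        exact absurd (le_antisymm hPQ this) hlt.ne
    haveI : Group.IsNilpotent ↥(Q : Subgroup G) := Q.isPGroup'.isNilpotent
    have hnc := normalizerCondition_of_isNilpotent (G := ↥(Q : Subgroup G))
    have hRn : R < Subgroup.normalizer (R : Set ↥(Q : Subgroup G)) := hnc R hRlt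
    set S : Subgroup G := Subgroup.map (Q : Subgroup G).subtype (Subgroup.normalizer (R : Set ↥(Q : Subgroup G))) with hSdef
    have hP'S : P' < S := by
      rw [← hmapR, hSdef]
      exact ⟨Subgroup.map_mono hRn.le, fun hle => hRn.ne
        (Subgroup.map_injective (Q : Subgroup G).subtype_injective
          (le_antisymm (Subgroup.map_mono hRn.le) hle))⟩
    have hSpg : IsPGroup p S := (Q.isPGroup'.to_subgroup (Subgroup.normalizer (R : Set ↥(Q : Subgroup G)))).map _
    have hSleN : S ≤ Subgroup.normalizer (P' : Set G) := by
      rintro _ ⟨q, hq, rfl⟩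
      rw [Subgroup.mem_normalizer_iff]
      intro g
      constructor
      · intro hg
        have hgQ : g ∈ (Q : Subgroup G) := hPQ hg
        have hmem : (⟨g, hgQ⟩ : ↥(Q : Subgroup G)) ∈ R := hg
        exact (Subgroup.mem_normalizer_iff.mp hq (⟨g, hgQ⟩ : ↥(Q : Subgroup G))).mp hmem
      · intro hg
        have hcQ : (q : G) * g * (q : G)⁻¹ ∈ (Q : Subgroup G) := hPQ hg
        have hgQ : g ∈ (Q : Subgroup G) := by
          have := (Q : Subgroup G).mul_mem ((Q : Subgroup G).mul_mem
            ((Q : Subgroup G).inv_mem q.2) hcQ) q.2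
          simpa [mul_assoc] using this
        have hmem : q * ⟨g, hgQ⟩ * q⁻¹ ∈ R := by
          show ((q * ⟨g, hgQ⟩ * q⁻¹ : ↥(Q : Subgroup G)) : G) ∈ P'
          simpa using hg
        exact (Subgroup.mem_normalizer_iff.mp hq (⟨g, hgQ⟩ : ↥(Q : Subgroup G))).mpr hmem
    have hSleH : S ≤ stabilizer G ω := hN ▸ hSleN
    -- S.subgroupOf (stabilizer G ω) is a p-subgroup containing P; maximality of P
    have hSpgH : IsPGroup p (S.subgroupOf (stabilizer G ω)) :=
      hSpg.of_equiv (Subgroup.subgroupOfEquivOfLe hSleH).symm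
    have hPle : (P : Subgroup (stabilizer G ω)) ≤ S.subgroupOf (stabilizer G ω) := by
      intro k hk
      exact hP'S.le ⟨k, hk, rfl⟩
    have heq : S.subgroupOf (stabilizer G ω) = (P : Subgroup (stabilizer G ω)) :=
      P.is_maximal' hSpgH hPle
    have hSP' : S = P' := by
      have := congrArg (Subgroup.map (stabilizer G ω).subtype) heq
      rwa [Subgroup.subgroupOf_map_subtype, inf_eq_left.mpr hSleH] at this
    exact hP'S.ne hSP'.symm
  · -- normalizer P' = ⊤, so P' is normal in G; then P' acts trivially, so P' = ⊥.
    have htop : Subgroup.normalizer (P' : Set G) = ⊤ := (hprim ω).2 _ hN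
    have hnorm : P'.Normal := Subgroup.normalizer_eq_top_iff.mp htop
    have hbot : P' = ⊥ := by
      rw [eq_bot_iff]
      intro g hg
      have hg1 : g = 1 := by
        refine hfaith g fun x => ?_
        obtain ⟨a, rfl⟩ := htrans.exists_smul_eq ω x
        have h1 : a⁻¹ * g * a ∈ P' := hnorm.conj_mem' g hg a
        have h2 : (a⁻¹ * g * a) • ω = ω := hP'leH h1
        calc g • a • ω = a • (a⁻¹ * g * a) • ω := by
              rw [smul_smul, smul_smul]; group
          _ = a • ω := by rw [h2]
      simp [hg1]
    rw [hP'def] at hbot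
    have : (P : Subgroup (stabilizer G ω)) ≤ ⊥ := by
      have h := (Subgroup.map_eq_bot_iff _).mp hbot
      rwa [Subgroup.ker_subtype] at h
    exact hP1 (le_bot_iff.mp this)
end

section
/- Let p be a prime and let Γ be a finite connected regular simple graph of valency d ≥ 3 such that d − 1 is a power of p. Let X ≤ Aut(Γ) with Γ (X,2)-arc-transitive, let {u,v} be an edge of Γ, and assume X_{uv}^{[1]} = 1. Then: (1) for every prime r ≠ p, X_{uv} has no nontrivial normal r-subgroup (equivalently, the Fitting subgroup of X_{uv} equals O_p(X_{uv})); (2) for every prime r ≠ p, every normal r-subgroup of the setwise edge-stabilizer X_{{u,v}} has order at most 2; (3) O_p(X_{uv}) is contained in O_p(X_{{u,v}}) with index |O_p(X_{{u,v}}) : O_p(X_{uv})| ≤ 2. Consequently the Fitting subgroup of X_{{u,v}} contains O_p(X_{{u,v}}) with index at most 2. -/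
open MulAction
open scoped Pointwise

namespace Stmt12

/-- The kernel `X_v^{[1]}` of the action of `X_v` on the neighborhood `Γ(v)`,
as a subgroup of `X`: the elements fixing `v` and all its neighbors. -/
def kernel1 {V : Type*} (Γ : SimpleGraph V) (X : Type*) [Group X] [MulAction X V] (v : V) :
    Subgroup X :=
  stabilizer X v ⊓ ⨅ w ∈ Γ.neighborSet v, stabilizer X w

/-- `N` is a subgroup of `A` which is normalized by `A`. -/
def NormalIn {X : Type*} [Group X] (A N : Subgroup X) : Prop :=
  N ≤ A ∧ ∀ a ∈ A, ∀ n ∈ N, a * n * a⁻¹ ∈ N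

/-- `P = O_p(A)`: `P` is the largest `p`-subgroup of `A` which is normal in `A`. -/
def IsMaxNormalPIn {X : Type*} [Group X] (p : ℕ) (A P : Subgroup X) : Prop :=
  NormalIn A P ∧ IsPGroup p P ∧
    ∀ Q : Subgroup X, NormalIn A Q → IsPGroup p Q → Q ≤ P

/-- `F = Fit(A)`: `F` is the largest nilpotent subgroup of `A` which is normal in `A`,
i.e. the Fitting subgroup of `A`. -/ 
def IsFittingIn {X : Type*} [Group X] (A F : Subgroup X) : Prop :=
  NormalIn A F ∧ Group.IsNilpotent F ∧
    ∀ N : Subgroup X, NormalIn A N → Group.IsNilpotent N → N ≤ F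

section Helpers

variable {V X : Type*} [Fintype V] [Group X] [MulAction X V]

/-- A normal `r`-subgroup (`r ≠ p`) of `X_{uv}` fixes every neighbor of `u`. -/
lemma fixes_nbrs {Γ : SimpleGraph V} {p : ℕ} (hp : p.Prime) {d : ℕ}
    (hd1 : ∃ k : ℕ, d - 1 = p ^ k)
    (hreg : ∀ w : V, (Γ.neighborSet w).ncard = d)
    (hadj : ∀ (g : X) ⦃a b : V⦄, Γ.Adj a b → Γ.Adj (g • a) (g • b))
    (h2arc : ∀ ⦃v0 v1 v2 w0 w1 w2 : V⦄, Γ.Adj v0 v1 → Γ.Adj v1 v2 → v0 ≠ v2 →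
      Γ.Adj w0 w1 → Γ.Adj w1 w2 → w0 ≠ w2 →
        ∃ g : X, g • v0 = w0 ∧ g • v1 = w1 ∧ g • v2 = w2)
    {u v : V} (huv : Γ.Adj u v)
    {r : ℕ} (hr : r.Prime) (hrp : r ≠ p) {N : Subgroup X}
    (hN : NormalIn (stabilizer X u ⊓ stabilizer X v) N) (hNr : IsPGroup r N) :
    ∀ n ∈ N, ∀ w : V, Γ.Adj u w → n • w = w := by
  obtain ⟨k, hk⟩ := hd1
  have hmemN : ∀ n ∈ N, n • u = u ∧ n • v = v := by
    intro n hn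
    have h := hN.1 hn
    rw [Subgroup.mem_inf, mem_stabilizer_iff, mem_stabilizer_iff] at h
    exact h
  set S : Set V := {w : V | Γ.Adj u w ∧ w ≠ v} with hS
  letI : SMul ↥N ↥S := ⟨fun n w => ⟨(n : X) • (w : V), by
    obtain ⟨h1, h2⟩ := hmemN n n.2
    refine ⟨by simpa [h1] using hadj (n : X) w.2.1, fun h => w.2.2 ?_⟩
    have : (n : X) • (w : V) = (n : X) • v := by rw [h, h2]
    exact smul_left_cancel _ this⟩⟩
  have smul_def : ∀ (n : ↥N) (w : ↥S), ((n • w : ↥S) : V) = (n : X) • (w : V) :=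
    fun n w => rfl
  letI : MulAction ↥N ↥S :=
    { one_smul := fun w => Subtype.ext (by rw [smul_def]; simp)
      mul_smul := fun n m w => Subtype.ext (by simp only [smul_def]; rw [Subgroup.coe_mul, mul_smul]) }
  have hScard : Nat.card ↥S = p ^ k := by
    have hSeq : S = Γ.neighborSet u \ {v} := by
      ext w
      simp only [hS, Set.mem_setOf_eq, Set.mem_diff, SimpleGraph.mem_neighborSet,
        Set.mem_singleton_iff]
    rw [Nat.card_coe_set_eq, hSeq,
      Set.ncard_diff_singleton_of_mem (by simpa [SimpleGraph.mem_neighborSet] using huv),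
      hreg u, hk]
  have hnotdvd : ¬ r ∣ Nat.card ↥S := by
    rw [hScard]
    intro hdvd
    exact hrp ((Nat.prime_dvd_prime_iff_eq hr hp).mp (hr.dvd_of_dvd_pow hdvd))
  haveI := Fact.mk hr
  obtain ⟨w0, hw0⟩ := hNr.nonempty_fixed_point_of_prime_not_dvd_card (α := ↥S) hnotdvd
  intro n hn w hw
  by_cases hwv : w = v
  · subst hwv; exact (hmemN n hn).2
  · obtain ⟨g, hg0, hg1, hg2⟩ :=
      h2arc w0.2.1.symm huv w0.2.2 hw.symm huv hwv
    have hgA : g ∈ stabilizer X u ⊓ stabilizer X v := by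
      rw [Subgroup.mem_inf, mem_stabilizer_iff, mem_stabilizer_iff]
      exact ⟨hg1, hg2⟩
    have hn' : g⁻¹ * n * g ∈ N := by
      simpa using hN.2 g⁻¹ (inv_mem hgA) n hn
    have hfix : (g⁻¹ * n * g) • (w0 : V) = (w0 : V) := by
      have h := (mem_fixedPoints.mp hw0) ⟨g⁻¹ * n * g, hn'⟩
      exact congrArg Subtype.val h
    calc n • w = (n * g) • (w0 : V) := by rw [← hg0, smul_smul]
      _ = g • ((g⁻¹ * n * g) • (w0 : V)) := by
          rw [smul_smul]; congr 1; group
      _ = g • (w0 : V) := by rw [hfix]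
      _ = w := hg0


/-- Part (1): normal `r`-subgroups of `X_{uv}` are trivial for primes `r ≠ p`. -/
lemma part1 {Γ : SimpleGraph V} {p : ℕ} (hp : p.Prime) {d : ℕ}
    (hd1 : ∃ k : ℕ, d - 1 = p ^ k)
    (hreg : ∀ w : V, (Γ.neighborSet w).ncard = d)
    (hadj : ∀ (g : X) ⦃a b : V⦄, Γ.Adj a b → Γ.Adj (g • a) (g • b))
    (h2arc : ∀ ⦃v0 v1 v2 w0 w1 w2 : V⦄, Γ.Adj v0 v1 → Γ.Adj v1 v2 → v0 ≠ v2 →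
      Γ.Adj w0 w1 → Γ.Adj w1 w2 → w0 ≠ w2 →
        ∃ g : X, g • v0 = w0 ∧ g • v1 = w1 ∧ g • v2 = w2)
    {u v : V} (huv : Γ.Adj u v)
    (hker : kernel1 Γ X u ⊓ kernel1 Γ X v = ⊥)
    {r : ℕ} (hr : r.Prime) (hrp : r ≠ p) {N : Subgroup X}
    (hN : NormalIn (stabilizer X u ⊓ stabilizer X v) N) (hNr : IsPGroup r N) :
    N = ⊥ := by
  have hN' : NormalIn (stabilizer X v ⊓ stabilizer X u) N := by
    rwa [inf_comm] at hN
  have h1 := fixes_nbrs hp hd1 hreg hadj h2arc huv hr hrp hN hNr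
  have h2 := fixes_nbrs hp hd1 hreg hadj h2arc huv.symm hr hrp hN' hNr
  rw [eq_bot_iff]
  intro n hn
  have hmem := hN.1 hn
  rw [Subgroup.mem_inf, mem_stabilizer_iff, mem_stabilizer_iff] at hmem
  rw [← hker]
  simp only [kernel1, Subgroup.mem_inf, Subgroup.mem_iInf, mem_stabilizer_iff,
    SimpleGraph.mem_neighborSet]
  exact ⟨⟨hmem.1, fun w hw => h1 n hn w hw⟩, ⟨hmem.2, fun w hw => h2 n hn w hw⟩⟩

/-- Dichotomy for elements of the setwise edge stabilizer. -/
lemma edge_dichotomy {u v : V} (huv : u ≠ v) {g : X}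
    (hg : g ∈ stabilizer X ({u, v} : Set V)) :
    (g • u = u ∧ g • v = v) ∨ (g • u = v ∧ g • v = u) := by
  rw [mem_stabilizer_iff] at hg
  have hu : g • u ∈ ({u, v} : Set V) := by
    rw [← hg]; exact Set.smul_mem_smul_set (Set.mem_insert _ _)
  have hv : g • v ∈ ({u, v} : Set V) := by
    rw [← hg]; exact Set.smul_mem_smul_set (Set.mem_insert_of_mem _ rfl)
  rcases hu with hu | hu
  · left
    refine ⟨hu, ?_⟩
    rcases hv with hv | hv
    · exact absurd (smul_left_cancel g (hu.trans hv.symm)) huv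
    · exact hv
  · right
    refine ⟨hu, ?_⟩
    rcases hv with hv | hv
    · exact hv
    · exact absurd (smul_left_cancel g (hu.trans hv.symm)) huv

/-- `X_{uv} ≤ X_{{u,v}}`. -/
lemma pt_le_edge {u v : V} :
    stabilizer X u ⊓ stabilizer X v ≤ stabilizer X ({u, v} : Set V) := by
  intro g hg
  rw [Subgroup.mem_inf, mem_stabilizer_iff, mem_stabilizer_iff] at hg
  rw [mem_stabilizer_iff]
  rw [Set.smul_set_insert, Set.smul_set_singleton, hg.1, hg.2]

/-- Conjugation by the edge stabilizer preserves `X_{uv}`. -/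
lemma conj_mem_pt {u v : V} (huv : u ≠ v) {a : X}
    (ha : a ∈ stabilizer X ({u, v} : Set V)) {b : X}
    (hb : b ∈ stabilizer X u ⊓ stabilizer X v) :
    a * b * a⁻¹ ∈ stabilizer X u ⊓ stabilizer X v := by
  rw [Subgroup.mem_inf, mem_stabilizer_iff, mem_stabilizer_iff] at hb ⊢
  rcases edge_dichotomy huv ha with ⟨h1, h2⟩ | ⟨h1, h2⟩
  · have hiu : a⁻¹ • u = u := inv_smul_eq_iff.mpr h1.symm
    have hiv : a⁻¹ • v = v := inv_smul_eq_iff.mpr h2.symm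
    constructor <;> simp [mul_smul, hiu, hiv, hb.1, hb.2, h1, h2]
  · have hiu : a⁻¹ • u = v := inv_smul_eq_iff.mpr h2.symm
    have hiv : a⁻¹ • v = u := inv_smul_eq_iff.mpr h1.symm
    constructor <;> simp [mul_smul, hiu, hiv, hb.1, hb.2, h1, h2]


/-- membership of the image of `u` for edge-stabilizer elements -/
lemma smul_mem_pair {u v : V} {g : X} (hg : g ∈ stabilizer X ({u, v} : Set V)) :
    g • u ∈ ({u, v} : Set V) := by
  rw [mem_stabilizer_iff] at hg
  rw [← hg]; exact Set.smul_mem_smul_set (Set.mem_insert _ _)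

lemma card_pair_le {u v : V} : Nat.card ↥({u, v} : Set V) ≤ 2 := by
  rw [Nat.card_coe_set_eq]
  exact le_trans (Set.ncard_insert_le _ _) (by simp)

/-- Part (2). -/
lemma part2 {Γ : SimpleGraph V} {p : ℕ} (hp : p.Prime) {d : ℕ}
    (hd1 : ∃ k : ℕ, d - 1 = p ^ k)
    (hreg : ∀ w : V, (Γ.neighborSet w).ncard = d)
    (hadj : ∀ (g : X) ⦃a b : V⦄, Γ.Adj a b → Γ.Adj (g • a) (g • b))
    (h2arc : ∀ ⦃v0 v1 v2 w0 w1 w2 : V⦄, Γ.Adj v0 v1 → Γ.Adj v1 v2 → v0 ≠ v2 →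
      Γ.Adj w0 w1 → Γ.Adj w1 w2 → w0 ≠ w2 →
        ∃ g : X, g • v0 = w0 ∧ g • v1 = w1 ∧ g • v2 = w2)
    {u v : V} (huv : Γ.Adj u v)
    (hker : kernel1 Γ X u ⊓ kernel1 Γ X v = ⊥)
    {r : ℕ} (hr : r.Prime) (hrp : r ≠ p) {N : Subgroup X}
    (hN : NormalIn (stabilizer X ({u, v} : Set V)) N) (hNr : IsPGroup r N) :
    Nat.card N ≤ 2 := by
  have hune : u ≠ v := huv.ne
  have hM : N ⊓ (stabilizer X u ⊓ stabilizer X v) = ⊥ := by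
    refine part1 hp hd1 hreg hadj h2arc huv hker hr hrp ⟨inf_le_right, ?_⟩
      (hNr.to_le inf_le_left)
    intro a ha n hn
    rw [Subgroup.mem_inf] at hn ⊢
    exact ⟨hN.2 a (pt_le_edge ha) n hn.1,
      mul_mem (mul_mem ha hn.2) (inv_mem ha)⟩
  have hf : Function.Injective
      (fun n : ↥N => (⟨(n : X) • u, smul_mem_pair (hN.1 n.2)⟩ : ({u, v} : Set V))) := by
    intro n1 n2 h
    rw [Subtype.ext_iff] at h
    simp only at h
    have hgu : ((n2⁻¹ * n1 : ↥N) : X) • u = u := by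
      push_cast
      rw [mul_smul, h, inv_smul_smul]
    have hgE : ((n2⁻¹ * n1 : ↥N) : X) ∈ stabilizer X ({u, v} : Set V) :=
      hN.1 (n2⁻¹ * n1).2
    have hgv : ((n2⁻¹ * n1 : ↥N) : X) • v = v := by
      rcases edge_dichotomy hune hgE with ⟨_, h2⟩ | ⟨h1, _⟩
      · exact h2
      · exact absurd (hgu.symm.trans h1) hune
    have : ((n2⁻¹ * n1 : ↥N) : X) ∈ N ⊓ (stabilizer X u ⊓ stabilizer X v) := by
      rw [Subgroup.mem_inf, Subgroup.mem_inf, mem_stabilizer_iff, mem_stabilizer_iff]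
      exact ⟨(n2⁻¹ * n1).2, hgu, hgv⟩
    rw [hM, Subgroup.mem_bot] at this
    have : (n2⁻¹ * n1 : ↥N) = 1 := Subtype.ext (by simpa using this)
    exact (inv_mul_eq_one.mp this).symm
  exact le_trans (Nat.card_le_card_of_injective _ hf) card_pair_le

/-- Part (3). -/
lemma part3 {Γ : SimpleGraph V} {p : ℕ} (hp : p.Prime) {d : ℕ}
    (hd1 : ∃ k : ℕ, d - 1 = p ^ k)
    (hreg : ∀ w : V, (Γ.neighborSet w).ncard = d)
    (hadj : ∀ (g : X) ⦃a b : V⦄, Γ.Adj a b → Γ.Adj (g • a) (g • b))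
    (h2arc : ∀ ⦃v0 v1 v2 w0 w1 w2 : V⦄, Γ.Adj v0 v1 → Γ.Adj v1 v2 → v0 ≠ v2 →
      Γ.Adj w0 w1 → Γ.Adj w1 w2 → w0 ≠ w2 →
        ∃ g : X, g • v0 = w0 ∧ g • v1 = w1 ∧ g • v2 = w2)
    {u v : V} (huv : Γ.Adj u v)
    (hker : kernel1 Γ X u ⊓ kernel1 Γ X v = ⊥)
    {P Q : Subgroup X}
    (hP : IsMaxNormalPIn p (stabilizer X u ⊓ stabilizer X v) P)
    (hQ : IsMaxNormalPIn p (stabilizer X ({u, v} : Set V)) Q) :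
    P ≤ Q ∧ P.relIndex Q ≤ 2 := by
  have hune : u ≠ v := huv.ne
  have hPE : NormalIn (stabilizer X ({u, v} : Set V)) P := by
    refine ⟨le_trans hP.1.1 pt_le_edge, ?_⟩
    intro a ha n hn
    have key : P.map (MulAut.conj a).toMonoidHom ≤ P := by
      refine hP.2.2 _ ⟨?_, ?_⟩ (hP.2.1.map _)
      · rintro x hx
        rw [Subgroup.mem_map] at hx
        obtain ⟨y, hy, rfl⟩ := hx
        simpa using conj_mem_pt hune ha (hP.1.1 hy)
      · intro b hb x hx
        rw [Subgroup.mem_map] at hx ⊢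
        obtain ⟨y, hy, rfl⟩ := hx
        have hb' : a⁻¹ * b * a ∈ stabilizer X u ⊓ stabilizer X v := by
          have := conj_mem_pt hune (inv_mem ha) hb
          rwa [inv_inv] at this
        refine ⟨(a⁻¹ * b * a) * y * (a⁻¹ * b * a)⁻¹, hP.1.2 _ hb' y hy, ?_⟩
        simp only [MulEquiv.coe_toMonoidHom, MulAut.conj_apply]
        group
    have := key (Subgroup.mem_map_of_mem (MulAut.conj a).toMonoidHom hn)
    simpa using this
  have hPQ : P ≤ Q := hQ.2.2 P hPE hP.2.1
  have hQA : Q ⊓ (stabilizer X u ⊓ stabilizer X v) ≤ P := by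
    refine hP.2.2 _ ⟨inf_le_right, ?_⟩ (hQ.2.1.to_le inf_le_left)
    intro a ha n hn
    rw [Subgroup.mem_inf] at hn ⊢
    exact ⟨hQ.1.2 a (pt_le_edge ha) n hn.1,
      mul_mem (mul_mem ha hn.2) (inv_mem ha)⟩
  refine ⟨hPQ, ?_⟩
  rw [Subgroup.relIndex, Subgroup.index_eq_card]
  have hfbar : ∃ f : (↥Q ⧸ P.subgroupOf Q) → ({u, v} : Set V), Function.Injective f := by
    refine ⟨Quotient.lift
      (fun q : ↥Q => (⟨(q : X) • u, smul_mem_pair (hQ.1.1 q.2)⟩ : ({u, v} : Set V)))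
      ?_, ?_⟩
    · intro q1 q2 hq
      have hq : ((q1⁻¹ * q2 : ↥Q) : X) ∈ P :=
        Subgroup.mem_subgroupOf.mp
          ((QuotientGroup.leftRel_apply (s := P.subgroupOf Q)).mp hq)
      have : ((q1⁻¹ * q2 : ↥Q) : X) • u = u :=
        mem_stabilizer_iff.mp ((hP.1.1 hq).1)
      have h2 : (q2 : X) • u = (q1 : X) • u := by
        have := congrArg (fun z => (q1 : X) • z) this
        simpa [mul_smul] using this
      exact Subtype.ext h2.symm
    · intro x y
      refine Quotient.inductionOn₂ x y ?_
      intro q1 q2 h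
      rw [Subtype.ext_iff] at h
      simp only [Quotient.lift_mk] at h
      refine Quotient.sound ((QuotientGroup.leftRel_apply (s := P.subgroupOf Q)).mpr ?_)
      rw [Subgroup.mem_subgroupOf]
      have hgu : ((q1⁻¹ * q2 : ↥Q) : X) • u = u := by
        push_cast
        rw [mul_smul, ← h, inv_smul_smul]
      have hgE : ((q1⁻¹ * q2 : ↥Q) : X) ∈ stabilizer X ({u, v} : Set V) :=
        hQ.1.1 (q1⁻¹ * q2).2
      have hgv : ((q1⁻¹ * q2 : ↥Q) : X) • v = v := by
        rcases edge_dichotomy hune hgE with ⟨_, h2⟩ | ⟨h1, _⟩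
        · exact h2
        · exact absurd (hgu.symm.trans h1) hune
      refine hQA ?_
      rw [Subgroup.mem_inf, Subgroup.mem_inf, mem_stabilizer_iff, mem_stabilizer_iff]
      exact ⟨(q1⁻¹ * q2).2, hgu, hgv⟩
  obtain ⟨f, hf⟩ := hfbar
  exact le_trans (Nat.card_le_card_of_injective f hf) card_pair_le


/-- Part (4), abstract version: in a finite group, if every normal `r`-subgroup
(`r ≠ p`) of `E` has order at most 2, then the Fitting-in-`E` subgroup contains
`O_p`-in-`E` with index at most 2. -/
lemma part4 {p : ℕ} (hp : p.Prime) [Finite X] {E Q F : Subgroup X}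
    (hpart2 : ∀ r : ℕ, r.Prime → r ≠ p → ∀ N : Subgroup X,
      NormalIn E N → IsPGroup r N → Nat.card N ≤ 2)
    (hQ : IsMaxNormalPIn p E Q) (hF : IsFittingIn E F) :
    Q ≤ F ∧ Q.relIndex F ≤ 2 := by
  haveI := Fact.mk hp
  have hQF : Q ≤ F := hF.2.2 Q hQ.1 (hQ.2.1.isNilpotent)
  haveI hnil : Group.IsNilpotent ↥F := hF.2.1
  haveI : Finite (Subgroup ↥F) :=
    Finite.of_injective (fun H : Subgroup ↥F => (H : Set ↥F)) SetLike.coe_injective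
  haveI : ∀ q : ℕ, Finite (Sylow q ↥F) := fun q =>
    Finite.of_injective (fun S : Sylow q ↥F => (S : Subgroup ↥F))
      (fun _ _ h => Sylow.ext h)
  have hsylnormal : ∀ (q : ℕ) (_ : Fact q.Prime) (S : Sylow q ↥F),
      (↑S : Subgroup ↥F).Normal :=
    ((isNilpotent_of_finite_tfae (G := ↥F)).out 0 3).mp hnil
  have hsyl_unique : ∀ (q : ℕ), q.Prime → ∀ S T : Sylow q ↥F, S = T := by
    intro q hq S T
    haveI := Fact.mk hq
    haveI := Sylow.unique_of_normal S (hsylnormal q ⟨hq⟩ S)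
    exact Subsingleton.elim S T
  -- the mapped Sylow subgroups of F, as subgroups of X
  have hmap_le : ∀ (q : ℕ) (S : Sylow q ↥F), (S : Subgroup ↥F).map F.subtype ≤ F := by
    intro q S x hx
    rw [Subgroup.mem_map] at hx
    obtain ⟨y, _, rfl⟩ := hx
    exact y.2
  have hSyl : ∀ (q : ℕ) (hq : q.Prime) (S : Sylow q ↥F),
      NormalIn E ((S : Subgroup ↥F).map F.subtype) := by
    intro q hq S
    refine ⟨le_trans (hmap_le q S) hF.1.1, ?_⟩
    intro a ha x hx
    set S' := (S : Subgroup ↥F).map F.subtype with hS'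
    have hS'q : IsPGroup q S' := S.isPGroup'.map F.subtype
    set K := S'.map (MulAut.conj a).toMonoidHom with hKdef
    have hxK : a * x * a⁻¹ ∈ K := by
      rw [hKdef, Subgroup.mem_map]
      exact ⟨x, hx, by simp [MulAut.conj_apply]⟩
    have hKF : K ≤ F := by
      rintro z hz
      rw [hKdef, Subgroup.mem_map] at hz
      obtain ⟨y, hy, rfl⟩ := hz
      simp only [MulEquiv.coe_toMonoidHom, MulAut.conj_apply]
      exact hF.1.2 a ha y (hmap_le q S hy)
    have hKq : IsPGroup q K := hS'q.map _
    have hKsub : IsPGroup q (K.subgroupOf F) :=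
      hKq.comap_of_injective F.subtype Subtype.coe_injective
    obtain ⟨T, hT⟩ := hKsub.exists_le_sylow
    have hTS : (T : Subgroup ↥F) ≤ (S : Subgroup ↥F) :=
      le_of_eq (congrArg _ (hsyl_unique q hq T S))
    have hmem : (⟨a * x * a⁻¹, hKF hxK⟩ : ↥F) ∈ (S : Subgroup ↥F) :=
      hTS (hT (by rwa [Subgroup.mem_subgroupOf]))
    rw [hS', Subgroup.mem_map]
    exact ⟨⟨a * x * a⁻¹, hKF hxK⟩, hmem, rfl⟩
  -- cardinality bookkeeping
  set nF := Nat.card ↥F with hnFdef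
  have hnF0 : nF ≠ 0 := Nat.card_pos.ne'
  have hcard_map : ∀ (q : ℕ) (S : Sylow q ↥F),
      Nat.card ↥((S : Subgroup ↥F).map F.subtype) = Nat.card ↥(S : Subgroup ↥F) :=
    fun q S => (Nat.card_congr ((S : Subgroup ↥F).equivMapOfInjective F.subtype
      Subtype.coe_injective).toEquiv).symm
  obtain ⟨Sp⟩ : Nonempty (Sylow p ↥F) := inferInstance
  set T' := (Sp : Subgroup ↥F).map F.subtype with hT'def
  have hT'F : T' ≤ F := hmap_le p Sp
  have hT'Q : T' ≤ Q := hQ.2.2 T' (hSyl p hp Sp) (Sp.isPGroup'.map F.subtype)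
  set n' := T'.relIndex F with hn'def
  have hcardT' : Nat.card ↥T' = p ^ nF.factorization p := by
    rw [hT'def, hcard_map p Sp]
    exact Sylow.card_eq_multiplicity Sp
  have hmul : n' * Nat.card ↥T' = nF := by
    have he : Nat.card ↥(T'.subgroupOf F) = Nat.card ↥T' :=
      Nat.card_congr (Subgroup.subgroupOfEquivOfLe hT'F).toEquiv
    rw [hn'def, Subgroup.relIndex, ← he]
    exact Subgroup.index_mul_card _
  have hn'0 : n' ≠ 0 := by
    intro h
    rw [h, zero_mul] at hmul
    exact hnF0 hmul.symm
  have hn'dvd : n' ∣ nF := ⟨_, hmul.symm⟩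
  have hdvd : ∀ q : ℕ, q.Prime → q ∣ n' → q = 2 ∧ nF.factorization q ≤ 1 := by
    intro q hq hqn'
    have hq_ne_p : q ≠ p := by
      intro h; subst h
      have hdv : q ^ (nF.factorization q + 1) ∣ nF := by
        conv_rhs => rw [← hmul, hcardT']
        rw [pow_succ]
        simpa [mul_comm] using Nat.mul_dvd_mul_left (q ^ nF.factorization q) hqn'
      have := (Nat.Prime.pow_dvd_iff_le_factorization hq hnF0).mp hdv
      omega
    have hqnF : q ∣ nF := hqn'.trans hn'dvd
    haveI := Fact.mk hq
    obtain ⟨Sq⟩ : Nonempty (Sylow q ↥F) := inferInstance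
    have hle2 : Nat.card ↥((Sq : Subgroup ↥F).map F.subtype) ≤ 2 :=
      hpart2 q hq hq_ne_p _ (hSyl q hq Sq) (Sq.isPGroup'.map F.subtype)
    rw [hcard_map q Sq, Sylow.card_eq_multiplicity Sq, ← hnFdef] at hle2
    have hvq : 0 < nF.factorization q := hq.factorization_pos_of_dvd hnF0 hqnF
    have hq2 : q ≤ q ^ nF.factorization q := Nat.le_self_pow hvq.ne' q
    have hq_eq : q = 2 := le_antisymm (le_trans hq2 hle2) hq.two_le
    subst hq_eq
    refine ⟨rfl, ?_⟩
    by_contra hcon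
    push_neg at hcon
    have : 2 ^ 2 ≤ 2 ^ nF.factorization 2 := Nat.pow_le_pow_right (by norm_num) hcon
    omega
  have hn'2 : n' ≤ 2 := by
    have heq := Nat.eq_prime_pow_of_unique_prime_dvd (n := n') (p := 2) hn'0
      (fun {q} hq hqn => (hdvd q hq hqn).1)
    rcases Nat.eq_zero_or_pos n'.primeFactorsList.length with h0 | hL
    · rw [heq, h0, pow_zero]; omega
    · have h2n' : (2:ℕ) ∣ n' := by
        conv_rhs => rw [heq]
        exact dvd_pow_self 2 (by omega)
      obtain ⟨-, hv2⟩ := hdvd 2 Nat.prime_two h2n'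
      have hpow : (2:ℕ) ^ n'.primeFactorsList.length ∣ nF := by
        rw [← heq]; exact hn'dvd
      have hlen : n'.primeFactorsList.length ≤ nF.factorization 2 :=
        (Nat.Prime.pow_dvd_iff_le_factorization Nat.prime_two hnF0).mp hpow
      calc n' = 2 ^ n'.primeFactorsList.length := heq
        _ ≤ 2 ^ 1 := Nat.pow_le_pow_right (by norm_num) (by omega)
        _ = 2 := rfl
  have hreldvd : Q.relIndex F ∣ n' :=
    Dvd.intro_left _ (Subgroup.relIndex_mul_relIndex T' Q F hT'Q hQF)
  exact ⟨hQF, le_trans (Nat.le_of_dvd (Nat.pos_of_ne_zero hn'0) hreldvd) hn'2⟩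

end Helpers

/-- Let `p` be a prime and `Γ` a finite connected regular graph of
valency `d ≥ 3` with `d − 1` a power of `p`. Let `X ≤ Aut Γ` with `Γ`
`(X,2)`-arc-transitive, `{u,v}` an edge, and `X_{uv}^{[1]} = 1`. Then: (1) for every
prime `r ≠ p`, `X_{uv}` has no nontrivial normal `r`-subgroup (so `Fit(X_{uv}) =
O_p(X_{uv})`); (2) for every prime `r ≠ p`, every normal `r`-subgroup of `X_{{u,v}}`
has order at most `2`; (3) `O_p(X_{uv}) ≤ O_p(X_{{u,v}})` with index at most `2`;
consequently `Fit(X_{{u,v}})` contains `O_p(X_{{u,v}})` with index at most `2`. -/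
theorem stmt_12 {V X : Type*} [Fintype V] [Group X] [MulAction X V]
    (Γ : SimpleGraph V) (p : ℕ) (hp : p.Prime) (d : ℕ) (hd : 3 ≤ d)
    (hd1 : ∃ k : ℕ, d - 1 = p ^ k)
    (hreg : ∀ w : V, (Γ.neighborSet w).ncard = d)
    (hconn : Γ.Connected)
    (hadj : ∀ (g : X) ⦃a b : V⦄, Γ.Adj a b → Γ.Adj (g • a) (g • b))
    (hfaith : ∀ g : X, (∀ x : V, g • x = x) → g = 1)
    (h2arc : ∀ ⦃v0 v1 v2 w0 w1 w2 : V⦄, Γ.Adj v0 v1 → Γ.Adj v1 v2 → v0 ≠ v2 →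
      Γ.Adj w0 w1 → Γ.Adj w1 w2 → w0 ≠ w2 →
        ∃ g : X, g • v0 = w0 ∧ g • v1 = w1 ∧ g • v2 = w2)
    {u v : V} (huv : Γ.Adj u v)
    (hker : kernel1 Γ X u ⊓ kernel1 Γ X v = ⊥) :
    -- (1) `X_{uv}` has no nontrivial normal `r`-subgroup for any prime `r ≠ p`
    (∀ r : ℕ, r.Prime → r ≠ p → ∀ N : Subgroup X,
      NormalIn (stabilizer X u ⊓ stabilizer X v) N → IsPGroup r N → N = ⊥) ∧
    -- (2) normal `r`-subgroups of `X_{{u,v}}` have order at most `2` for primes `r ≠ p`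
    (∀ r : ℕ, r.Prime → r ≠ p → ∀ N : Subgroup X,
      NormalIn (stabilizer X ({u, v} : Set V)) N → IsPGroup r N → Nat.card N ≤ 2) ∧
    -- (3) `O_p(X_{uv}) ≤ O_p(X_{{u,v}})` with index at most `2`
    (∀ P Q : Subgroup X,
      IsMaxNormalPIn p (stabilizer X u ⊓ stabilizer X v) P →
      IsMaxNormalPIn p (stabilizer X ({u, v} : Set V)) Q →
        P ≤ Q ∧ P.relIndex Q ≤ 2) ∧
    -- consequently `O_p(X_{{u,v}}) ≤ Fit(X_{{u,v}})` with index at most `2`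
    (∀ Q F : Subgroup X,
      IsMaxNormalPIn p (stabilizer X ({u, v} : Set V)) Q →
      IsFittingIn (stabilizer X ({u, v} : Set V)) F →
        Q ≤ F ∧ Q.relIndex F ≤ 2) := by
  have hfin : Finite X := by
    have hinj : Function.Injective (MulAction.toPermHom X V) := by
      intro g h hgh
      have hx : ∀ x : V, g • x = h • x := fun x => by
        have := congrArg (fun e : Equiv.Perm V => e x) hgh
        simpa using this
      have h1 : h⁻¹ * g = 1 :=
        hfaith _ (fun x => by rw [mul_smul, hx, inv_smul_smul])
      exact (inv_mul_eq_one.mp h1).symm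
    exact Finite.of_injective _ hinj
  refine ⟨?_, ?_, ?_, ?_⟩
  · intro r hr hrp N hN hNr
    exact part1 hp hd1 hreg hadj h2arc huv hker hr hrp hN hNr
  · intro r hr hrp N hN hNr
    exact part2 hp hd1 hreg hadj h2arc huv hker hr hrp hN hNr
  · intro P Q hP hQ
    exact part3 hp hd1 hreg hadj h2arc huv hker hP hQ
  · intro Q F hQ hF
    exact part4 hp
      (fun r hr hrp N hN hNr => part2 hp hd1 hreg hadj h2arc huv hker hr hrp hN hNr)
      hQ hF


end Stmt12
end
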